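/- arXiv:1004.2453 — 9 statements merged into one kernel-verified Lean document; each statement's English description precedes it below -/
import Mathlib

section
/- For every nonnegative integer n, ∑_{k=0}^{⌊n/2⌋} 2^{-2k} · C(n, 2k) · C(2k, k) = 2^{-n} · C(2n, n). -/
open Polynomial Finset

lemma key (n : ℕ) : ∑ k ∈ Finset.range (n / 2 + 1),
    2 ^ (n - 2 * k) * (n.choose (2 * k)) * ((2 * k).choose k) = (2 * n).choose n := by
  have h1 : ((2 * n).choose n : ℕ) = (((X + 1 : ℕ[X]) ^ 2) ^ n).coeff n := by
    rw [← pow_mul, coeff_X_add_one_pow, Nat.cast_id]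
  have h2 : ((X + 1 : ℕ[X]) ^ 2) = (X + C 2) * X + 1 := by
    have : (C 2 : ℕ[X]) = 2 := by simp
    rw [this]; ring
  rw [h1, h2, add_pow, finset_sum_coeff]
  have hterm : ∀ j ∈ range (n + 1),
      (((X + C 2) * X) ^ j * 1 ^ (n - j) * ((n.choose j : ℕ) : ℕ[X])).coeff n
      = 2 ^ (j - (n - j)) * (j.choose (n - j)) * (n.choose j) := by
    intro j hj
    rw [one_pow, mul_one, mul_pow, ← C_eq_natCast, coeff_mul_C, coeff_mul_X_pow',
        if_pos (Finset.mem_range_succ_iff.mp hj), coeff_X_add_C_pow]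
    push_cast
    ring
  rw [Finset.sum_congr rfl hterm,
    ← Finset.sum_range_reflect (fun j => 2 ^ (j - (n - j)) * (j.choose (n - j)) * (n.choose j)) (n + 1)]
  apply Finset.sum_subset_zero_on_sdiff
  · exact Finset.range_subset_range.mpr (by omega)
  · intro k hk
    simp only [Finset.mem_sdiff, Finset.mem_range] at hk
    have e1 : n + 1 - 1 - k = n - k := by omega
    have h1 : n - k < n - (n - k) := by omega
    rw [e1, Nat.choose_eq_zero_of_lt h1, mul_zero, zero_mul]
  · intro k hk
    simp only [Finset.mem_range] at hk
    have h2k : 2 * k ≤ n := by omega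
    have e1 : n + 1 - 1 - k = n - k := by omega
    have e2 : n - (n - k) = k := by omega
    have e3 : n - k - k = n - 2 * k := by omega
    rw [e1, e2, e3, Nat.choose_symm (by omega : k ≤ n)]
    have h := Nat.choose_mul (n := n) (by omega : k ≤ 2 * k)
    rw [show 2 * k - k = k by omega] at h
    rw [mul_assoc, h]
    ring

theorem finite_sum_identity (n : ℕ) :
    ∑ k ∈ Finset.range (n / 2 + 1),
      (1 / 2 ^ (2 * k) : ℝ) * (n.choose (2 * k)) * ((2 * k).choose k) =
      (1 / 2 ^ n : ℝ) * ((2 * n).choose n) := by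
  have hkey : ((∑ k ∈ Finset.range (n / 2 + 1),
      2 ^ (n - 2 * k) * (n.choose (2 * k)) * ((2 * k).choose k) : ℕ) : ℝ)
      = (((2 * n).choose n : ℕ) : ℝ) := by exact_mod_cast congrArg (Nat.cast (R := ℝ)) (key n)
  push_cast at hkey
  rw [← hkey, Finset.mul_sum]
  apply Finset.sum_congr rfl
  intro k hk
  simp only [Finset.mem_range] at hk
  have h2k : 2 * k ≤ n := by omega
  have hpow : (2 : ℝ) ^ n = 2 ^ (n - 2 * k) * 2 ^ (2 * k) := by
    rw [← pow_add]; congr 1; omega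
  rw [hpow]
  have h1 : (2 : ℝ) ^ (2 * k) ≠ 0 := by positivity
  have h2 : (2 : ℝ) ^ (n - 2 * k) ≠ 0 := by positivity
  field_simp
end

section
/- For every nonnegative integer n, (2/π) ∫₀^{π/2} (cos θ)^(2n) dθ = 2^{-n} ∑_{k=0}^{⌊n/2⌋} C(n, 2k) · (2/π) ∫₀^{π/2} (cos θ)^(2k) dθ. -/
open Real
open Polynomial Finset

lemma key_ident (n : ℕ) :
    ((2 * n).choose n : ℕ) =
      ∑ k ∈ Finset.range (n / 2 + 1), 2 ^ (n - 2 * k) * n.choose (2 * k) * (2 * k).choose k := by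
  have hpoly : ((1 + X : ℕ[X]) ^ (2 * n)) = ((1 + X ^ 2) + 2 * X) ^ n := by
    rw [pow_mul]
    congr 1
    ring
  have lhs : (((1 + X : ℕ[X]) ^ (2 * n)).coeff n) = (2 * n).choose n :=
    coeff_one_add_X_pow ℕ (2 * n) n
  rw [hpoly] at lhs
  rw [← lhs, add_pow]
  rw [finset_sum_coeff]
  have hterm : ∀ j ∈ Finset.range (n + 1),
      (((1 + X ^ 2 : ℕ[X]) ^ j * (2 * X) ^ (n - j) * ((n.choose j : ℕ) : ℕ[X])).coeff n)
        = (if 2 ∣ j then 2 ^ (n - j) * n.choose j * j.choose (j / 2) else 0) := by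
    intro j hj
    rw [Finset.mem_range, Nat.lt_succ_iff] at hj
    have hexp : ((1 + X ^ 2 : ℕ[X]) ^ j) = Polynomial.expand ℕ 2 ((1 + X) ^ j) := by
      rw [map_pow, map_add, map_one, Polynomial.expand_X]
    have hre : ((1 + X ^ 2 : ℕ[X]) ^ j * (2 * X) ^ (n - j) * ((n.choose j : ℕ) : ℕ[X]))
        = (((2 ^ (n - j) * n.choose j : ℕ) : ℕ[X]) * (1 + X ^ 2) ^ j) * X ^ (n - j) := by
      push_cast
      ring
    rw [hre, Polynomial.coeff_mul_X_pow', if_pos (Nat.sub_le n j),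
      Nat.sub_sub_self hj, ← Polynomial.C_eq_natCast, Polynomial.coeff_C_mul, hexp,
      Polynomial.coeff_expand (by norm_num)]
    split_ifs with h
    · rw [coeff_one_add_X_pow]
      push_cast
      ring
    · simp
  rw [Finset.sum_congr rfl hterm]
  rw [← Finset.sum_filter]
  have himg : Finset.filter (fun j => 2 ∣ j) (Finset.range (n + 1))
      = (Finset.range (n / 2 + 1)).image (2 * ·) := by
    ext j
    simp only [Finset.mem_filter, Finset.mem_range, Finset.mem_image]
    constructor
    · rintro ⟨h1, k, rfl⟩
      exact ⟨k, by omega, rfl⟩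
    · rintro ⟨k, hk, rfl⟩
      exact ⟨by omega, k, rfl⟩
  rw [himg, Finset.sum_image (fun a _ b _ h => by omega)]
  refine Finset.sum_congr rfl fun k hk => ?_
  rw [Nat.mul_div_cancel_left k (by norm_num)]

lemma wallis_half (k : ℕ) :
    (2 / π) * ∫ θ in (0:ℝ)..(π / 2), cos θ ^ (2 * k) = ((2 * k).choose k : ℝ) / 4 ^ k := by
  induction k with
  | zero => simp
  | succ k ih =>
    have hred := integral_cos_pow (a := 0) (b := π / 2) (n := 2 * k)
    rw [Real.cos_pi_div_two, Real.sin_zero, zero_pow (by omega), zero_mul, mul_zero,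
      sub_zero, zero_div, zero_add] at hred
    have h2 : 2 * (k + 1) = 2 * k + 2 := by ring
    rw [h2, hred]
    have hc : ((k : ℝ) + 1) * ((2 * k + 2).choose (k+1) : ℝ)
        = 2 * (2 * k + 1) * ((2 * k).choose k : ℝ) := by
      have := Nat.succ_mul_centralBinom_succ k
      rw [Nat.centralBinom, Nat.centralBinom, show 2*(k+1) = 2*k+2 from by ring] at this
      exact_mod_cast this
    have : (2 / π) * ((2*(k:ℝ) + 1) / (2*k + 2) * ∫ θ in (0:ℝ)..(π/2), cos θ ^ (2*k))
        = (2*(k:ℝ) + 1) / (2*k + 2) * (((2*k).choose k : ℝ) / 4 ^ k) := by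
      rw [← ih]; ring
    push_cast
    rw [this]
    have h4 : (0:ℝ) < 4 ^ k := by positivity
    field_simp
    linear_combination (-2*(4:ℝ)^k) * hc

theorem cos_power_integral_recurrence (n : ℕ) :
    (2 / π) * ∫ θ in (0:ℝ)..(π / 2), cos θ ^ (2 * n) =
      (1 / 2 ^ n : ℝ) * ∑ k ∈ Finset.range (n / 2 + 1),
        (n.choose (2 * k) : ℝ) * ((2 / π) * ∫ θ in (0:ℝ)..(π / 2), cos θ ^ (2 * k)) := by
  rw [wallis_half n]
  rw [Finset.sum_congr rfl (fun k _ => by rw [wallis_half k])]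
  have hid : (((2 * n).choose n : ℕ) : ℝ)
      = ∑ k ∈ Finset.range (n / 2 + 1),
          (2:ℝ) ^ n / 4 ^ k * (n.choose (2 * k)) * ((2 * k).choose k) := by
    rw [congrArg (Nat.cast : ℕ → ℝ) (key_ident n)]
    push_cast
    refine Finset.sum_congr rfl fun k hk => ?_
    rw [Finset.mem_range, Nat.lt_succ_iff] at hk
    have h2k : 2 * k ≤ n := by omega
    rw [pow_sub₀ (2:ℝ) two_ne_zero h2k, pow_mul]
    norm_num [div_eq_mul_inv]
  rw [hid, Finset.sum_div, Finset.mul_sum]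
  refine Finset.sum_congr rfl fun k _ => ?_
  have h4 : (4:ℝ) ^ n = 2 ^ n * 2 ^ n := by rw [← mul_pow]; norm_num
  have h2 : (2:ℝ) ^ n ≠ 0 := by positivity
  have h4k : (4:ℝ) ^ k ≠ 0 := by positivity
  field_simp [h4]
  rw [h4]; ring
end

section
/- For all real s ≥ 0, the function f(s) = s · ∫₀^{π/2} (sin x)^s dx is strictly increasing on (0, ∞); in particular, for n ≥ 1, the ratio I_{2n}/I_{2n+1} of Wallis integrals satisfies 1 ≤ I_{2n}/I_{2n+1} ≤ 1 + 1/(2n). -/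
open Real MeasureTheory Set intervalIntegral

noncomputable def wg (s v : ℝ) : ℝ := v ^ (1/s) / Real.sqrt (1 - v ^ (2/s))

lemma wg_meas {s : ℝ} (hs : 0 < s) : Measurable (wg s) := by
  unfold wg
  exact ((Real.continuous_rpow_const (by positivity)).measurable).div
    ((continuous_const.sub (Real.continuous_rpow_const (by positivity))).sqrt.measurable)

lemma bern {c : ℝ} (hc : 0 < c) {v : ℝ} (h0 : 0 ≤ v) (h1 : v ≤ 1) :
    min c 1 * (1 - v) ≤ 1 - v ^ c := by
  rcases le_total c 1 with h | h
  · rw [min_eq_left h]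
    have hb := rpow_one_add_le_one_add_mul_self (s := v - 1) (by linarith) hc.le h
    have h2 : (1 : ℝ) + (v - 1) = v := by ring
    rw [h2] at hb
    nlinarith
  · rw [min_eq_right h]
    have : v ^ c ≤ v ^ (1:ℝ) := by
      rcases eq_or_lt_of_le h0 with h0' | h0'
      · rw [← h0', Real.zero_rpow hc.ne', Real.zero_rpow one_ne_zero]
      · exact Real.rpow_le_rpow_of_exponent_ge h0' h1 h
    rw [Real.rpow_one] at this; linarith

lemma wg_integrable {s : ℝ} (hs : 0 < s) : IntegrableOn (wg s) (Icc 0 1) := by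
  set m : ℝ := min (2/s) 1 with hm
  have hmpos : 0 < m := lt_min (by positivity) one_pos
  -- majorant
  have hmaj : IntervalIntegrable (fun v : ℝ => (Real.sqrt m)⁻¹ * (1 - v) ^ (-(1/2) : ℝ))
      volume 0 1 := by
    have h1 : IntervalIntegrable (fun v : ℝ => v ^ (-(1/2) : ℝ)) volume 0 1 :=
      intervalIntegral.intervalIntegrable_rpow' (by norm_num)
    have h2 := (h1.comp_sub_left 1)
    simp only [sub_zero, sub_self] at h2
    exact h2.symm.const_mul _
  have hmaj' : IntegrableOn (fun v : ℝ => (Real.sqrt m)⁻¹ * (1 - v) ^ (-(1/2) : ℝ))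
      (Icc 0 1) := by
    rw [intervalIntegrable_iff'] at hmaj
    simpa using hmaj
  refine hmaj'.mono' ((wg_meas hs).aestronglyMeasurable) ?_
  rw [ae_restrict_iff' measurableSet_Icc]
  filter_upwards with v hv
  obtain ⟨h0, h1⟩ := hv
  rcases eq_or_lt_of_le h1 with rfl | hlt
  · -- v = 1
    have e1 : wg s 1 = 0 := by
      unfold wg
      rw [Real.one_rpow, Real.one_rpow, sub_self, Real.sqrt_zero, div_zero]
    rw [e1, norm_zero, sub_self, Real.zero_rpow (by norm_num), mul_zero]
  · have hden : m * (1 - v) ≤ 1 - v ^ (2/s) := bern (by positivity) h0 h1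
    have hdenpos : 0 < m * (1 - v) := mul_pos hmpos (by linarith)
    have hnum : v ^ (1/s) ≤ 1 := Real.rpow_le_one h0 h1 (by positivity)
    have hnn : 0 ≤ v ^ (1/s) := Real.rpow_nonneg h0 _
    have ewg : wg s v = v ^ (1/s) / Real.sqrt (1 - v ^ (2/s)) := rfl
    rw [ewg, Real.norm_eq_abs, abs_of_nonneg (div_nonneg hnn (Real.sqrt_nonneg _))]
    have hsq : Real.sqrt (m * (1-v)) ≤ Real.sqrt (1 - v ^ (2/s)) := Real.sqrt_le_sqrt hden
    have hsqpos : 0 < Real.sqrt (m * (1-v)) := Real.sqrt_pos.mpr hdenpos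
    calc v ^ (1/s) / Real.sqrt (1 - v ^ (2/s)) ≤ 1 / Real.sqrt (m * (1-v)) :=
          div_le_div₀ zero_le_one hnum hsqpos hsq
      _ = (Real.sqrt m)⁻¹ * (1 - v) ^ (-(1/2) : ℝ) := by
          rw [Real.sqrt_mul hmpos.le, Real.rpow_neg (by linarith), ← Real.sqrt_eq_rpow,
            one_div, mul_inv]

lemma wg_cont {s : ℝ} (hs : 0 < s) : ContinuousOn (wg s) (Ico 0 1) := by
  apply ContinuousOn.div
  · exact (Real.continuous_rpow_const (by positivity)).continuousOn
  · exact (continuous_const.sub (Real.continuous_rpow_const (by positivity))).sqrt.continuousOn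
  · intro v hv
    have hlt : v ^ (2/s) < 1 := by
      rcases eq_or_lt_of_le hv.1 with rfl | h
      · rw [Real.zero_rpow (by positivity)]; norm_num
      · exact Real.rpow_lt_one hv.1 hv.2 (by positivity)
    exact Real.sqrt_ne_zero'.mpr (by linarith)

lemma sin_lt_one_of_mem {x : ℝ} (hx : x ∈ Ioo 0 (π/2)) :
    0 < Real.sin x ∧ Real.sin x < 1 ∧ 0 < Real.cos x := by
  have hpi : 0 < π := Real.pi_pos
  have hsin : 0 < Real.sin x := Real.sin_pos_of_pos_of_lt_pi hx.1 (by linarith [hx.2])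
  have hcos : 0 < Real.cos x := Real.cos_pos_of_mem_Ioo ⟨by linarith [hx.1], hx.2⟩
  have hsq := Real.sin_sq_add_cos_sq x
  refine ⟨hsin, by nlinarith, hcos⟩

lemma wg_comp {s : ℝ} (hs : 0 < s) {x : ℝ} (hx : x ∈ Ioo 0 (π/2)) :
    wg s (Real.sin x ^ s) * (Real.cos x * s * Real.sin x ^ (s-1)) = s * Real.sin x ^ s := by
  obtain ⟨hsin, hsin1, hcos⟩ := sin_lt_one_of_mem hx
  have h1 : (Real.sin x ^ s) ^ (1/s : ℝ) = Real.sin x := by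
    rw [← Real.rpow_mul hsin.le, mul_one_div, div_self hs.ne', Real.rpow_one]
  have h2 : (Real.sin x ^ s) ^ (2/s : ℝ) = Real.sin x ^ (2:ℝ) := by
    rw [← Real.rpow_mul hsin.le, mul_div_cancel₀ _ hs.ne']
  have h3 : 1 - Real.sin x ^ (2:ℝ) = Real.cos x ^ 2 := by
    rw [show (2:ℝ) = ((2:ℕ):ℝ) by norm_num, Real.rpow_natCast]
    nlinarith [Real.sin_sq_add_cos_sq x]
  have h4 : Real.sin x ^ (s-1) * Real.sin x = Real.sin x ^ s := by
    rw [← Real.rpow_add_one hsin.ne' (s-1)]; ring_nf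
  have ewg : wg s (Real.sin x ^ s)
      = (Real.sin x ^ s) ^ (1/s : ℝ) / Real.sqrt (1 - (Real.sin x ^ s) ^ (2/s : ℝ)) := rfl
  rw [ewg, h1, h2, h3, Real.sqrt_sq hcos.le]
  rw [← h4]; field_simp

lemma key_repr {s : ℝ} (hs : 0 < s) :
    s * ∫ x in (0:ℝ)..(π/2), Real.sin x ^ s = ∫ v in (0:ℝ)..1, wg s v := by
  have h2 : (0:ℝ) < π/2 := by positivity
  set f : ℝ → ℝ := fun x => Real.sin x ^ s with hfdef
  set f' : ℝ → ℝ := fun x => Real.cos x * s * Real.sin x ^ (s - 1) with hf'def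
  have hfc : ContinuousOn f (uIcc 0 (π/2)) :=
    Real.continuous_sin.continuousOn.rpow_const (fun x _ => Or.inr hs.le)
  have hderiv : ∀ x ∈ Ioo (min (0:ℝ) (π/2)) (max 0 (π/2)),
      HasDerivWithinAt f (f' x) (Ioi x) x := by
    rw [min_eq_left h2.le, max_eq_right h2.le]
    intro x hx
    have hsin := (sin_lt_one_of_mem hx).1
    exact ((Real.hasDerivAt_sin x).rpow_const (Or.inl hsin.ne')).hasDerivWithinAt
  have himg1 : f '' (Ioo (min (0:ℝ) (π/2)) (max 0 (π/2))) ⊆ Ico 0 1 := by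
    rw [min_eq_left h2.le, max_eq_right h2.le]
    rintro - ⟨x, hx, rfl⟩
    obtain ⟨hsin, hsin1, -⟩ := sin_lt_one_of_mem hx
    exact ⟨(Real.rpow_pos_of_pos hsin s).le, Real.rpow_lt_one hsin.le hsin1 hs⟩
  have himg2 : f '' (uIcc (0:ℝ) (π/2)) ⊆ Icc 0 1 := by
    rintro - ⟨x, hx, rfl⟩
    rw [uIcc_of_le h2.le] at hx
    have hsin0 : 0 ≤ Real.sin x := Real.sin_nonneg_of_nonneg_of_le_pi hx.1
      (by linarith [hx.2, Real.pi_pos])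
    exact ⟨Real.rpow_nonneg hsin0 s, Real.rpow_le_one hsin0 (Real.sin_le_one x) hs.le⟩
  have hgcont : ContinuousOn (wg s) (f '' Ioo (min (0:ℝ) (π/2)) (max 0 (π/2))) :=
    (wg_cont hs).mono himg1
  have hg1 : IntegrableOn (wg s) (f '' (uIcc (0:ℝ) (π/2))) :=
    (wg_integrable hs).mono_set himg2
  have hnull : (volume : Measure ℝ) ({0, π/2} : Set ℝ) = 0 :=
    ((Set.finite_singleton (π/2)).insert 0).measure_zero volume
  have hbase : IntegrableOn (fun x => s * Real.sin x ^ s) (uIcc (0:ℝ) (π/2)) := by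
    rw [uIcc_of_le h2.le]
    exact (continuousOn_const.mul
      (Real.continuous_sin.continuousOn.rpow_const (fun x _ => Or.inr hs.le))).integrableOn_Icc
  have hae : (fun x => s * Real.sin x ^ s) =ᵐ[volume.restrict (Icc (0:ℝ) (π/2))]
      (fun x => (wg s ∘ f) x * f' x) := by
    filter_upwards [ae_restrict_mem measurableSet_Icc,
      ae_restrict_of_ae (compl_mem_ae_iff.mpr hnull)] with x hx1 hx2
    have hxo : x ∈ Ioo 0 (π/2) := by
      simp only [mem_compl_iff, mem_insert_iff, mem_singleton_iff, not_or] at hx2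
      exact ⟨lt_of_le_of_ne hx1.1 (Ne.symm hx2.1), lt_of_le_of_ne hx1.2 hx2.2⟩
    exact (wg_comp hs hxo).symm
  have hg2 : IntegrableOn (fun x => (wg s ∘ f) x * f' x) (uIcc (0:ℝ) (π/2)) := by
    rw [uIcc_of_le h2.le]
    rw [uIcc_of_le h2.le] at hbase
    exact hbase.congr hae
  have H := intervalIntegral.integral_comp_mul_deriv''' hfc hderiv hgcont hg1 hg2
  have hf0 : f 0 = 0 := by simp [hfdef, Real.zero_rpow hs.ne']
  have hf1 : f (π/2) = 1 := by simp [hfdef]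
  rw [hf0, hf1] at H
  rw [← H, ← intervalIntegral.integral_const_mul]
  apply intervalIntegral.integral_congr_ae
  filter_upwards [compl_mem_ae_iff.mpr (Real.volume_singleton (a := π/2))] with x hx2 hx1
  rw [uIoc_of_le h2.le] at hx1
  rw [mem_compl_iff, mem_singleton_iff] at hx2
  have hxo : x ∈ Ioo 0 (π/2) := ⟨hx1.1, lt_of_le_of_ne hx1.2 hx2⟩
  exact (wg_comp hs hxo).symm

lemma wg_lt {s t v : ℝ} (hs : 0 < s) (hst : s < t) (hv : v ∈ Ioo (0:ℝ) 1) :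
    wg s v < wg t v := by
  have ht : 0 < t := hs.trans hst
  have h1 : v ^ (1/s) < v ^ (1/t) :=
    Real.rpow_lt_rpow_of_exponent_gt hv.1 hv.2 (one_div_lt_one_div_of_lt hs hst)
  have h2 : v ^ (2/s) < v ^ (2/t) := by
    apply Real.rpow_lt_rpow_of_exponent_gt hv.1 hv.2
    apply div_lt_div_of_pos_left (by norm_num) hs hst
  have h3 : v ^ (2/t) < 1 := Real.rpow_lt_one hv.1.le hv.2 (by positivity)
  have hd2 : 0 < Real.sqrt (1 - v ^ (2/t)) := Real.sqrt_pos.mpr (by linarith)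
  have hd : Real.sqrt (1 - v ^ (2/t)) ≤ Real.sqrt (1 - v ^ (2/s)) :=
    Real.sqrt_le_sqrt (by linarith)
  have hnum0 : 0 ≤ v ^ (1/s) := Real.rpow_nonneg hv.1.le _
  calc wg s v ≤ v ^ (1/s) / Real.sqrt (1 - v ^ (2/t)) := by
        unfold wg; exact div_le_div_of_nonneg_left hnum0 hd2 hd
    _ < v ^ (1/t) / Real.sqrt (1 - v ^ (2/t)) :=
        div_lt_div_of_pos_right h1 hd2
    _ = wg t v := rfl

lemma wg_intInt {s : ℝ} (hs : 0 < s) : IntervalIntegrable (wg s) volume 0 1 := by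
  rw [intervalIntegrable_iff']
  rw [uIcc_of_le zero_le_one]
  exact wg_integrable hs

lemma part1 : StrictMonoOn (fun s : ℝ => s * ∫ x in (0:ℝ)..(π/2), Real.sin x ^ s)
    (Set.Ioi 0) := by
  intro s hs t ht hst
  have hs' : (0:ℝ) < s := hs
  have ht' : (0:ℝ) < t := ht
  simp only
  rw [key_repr hs', key_repr ht']
  have his := wg_intInt hs'
  have hit := wg_intInt ht'
  have hpos : 0 < ∫ v in (0:ℝ)..1, (wg t v - wg s v) := by
    apply intervalIntegral_pos_of_pos_on (hit.sub his)
      (fun v hv => sub_pos.mpr (wg_lt hs' hst hv)) zero_lt_one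
  rw [intervalIntegral.integral_sub hit his] at hpos
  linarith

lemma J_pos (m : ℕ) : 0 < ∫ x in (0:ℝ)..(π/2), Real.sin x ^ m := by
  apply intervalIntegral_pos_of_pos_on
  · exact (Real.continuous_sin.pow m).intervalIntegrable 0 (π/2)
  · intro x hx
    exact pow_pos (sin_lt_one_of_mem hx).1 m
  · positivity

lemma J_mono (m : ℕ) : (∫ x in (0:ℝ)..(π/2), Real.sin x ^ (m+1))
    ≤ ∫ x in (0:ℝ)..(π/2), Real.sin x ^ m := by
  apply intervalIntegral.integral_mono_on (by positivity)
  · exact (Real.continuous_sin.pow _).intervalIntegrable 0 (π/2)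
  · exact (Real.continuous_sin.pow _).intervalIntegrable 0 (π/2)
  · intro x hx
    have h0 : 0 ≤ Real.sin x := Real.sin_nonneg_of_nonneg_of_le_pi hx.1
      (by linarith [hx.2, Real.pi_pos])
    exact pow_le_pow_of_le_one h0 (Real.sin_le_one x) (Nat.le_succ m)

lemma J_rec (m : ℕ) : (∫ x in (0:ℝ)..(π/2), Real.sin x ^ (m+2))
    = ((m:ℝ)+1)/((m:ℝ)+2) * ∫ x in (0:ℝ)..(π/2), Real.sin x ^ m := by
  rw [integral_sin_pow m]
  simp

theorem sin_pow_integral_monotone_and_ratio_bounds :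
    StrictMonoOn (fun s : ℝ => s * ∫ x in (0:ℝ)..(π / 2), sin x ^ s) (Set.Ioi 0) ∧
    ∀ n : ℕ, 1 ≤ n →
      1 ≤ (∫ x in (0:ℝ)..(π / 2), sin x ^ (2 * n)) /
            (∫ x in (0:ℝ)..(π / 2), sin x ^ (2 * n + 1)) ∧
      (∫ x in (0:ℝ)..(π / 2), sin x ^ (2 * n)) /
            (∫ x in (0:ℝ)..(π / 2), sin x ^ (2 * n + 1)) ≤ 1 + 1 / (2 * n) := by
  constructor
  · exact part1
  · intro n hn
    obtain ⟨k, rfl⟩ : ∃ k, n = k + 1 := ⟨n - 1, (Nat.succ_pred_eq_of_pos hn).symm⟩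
    have e1 : 2 * (k + 1) = 2 * k + 1 + 1 := by ring
    have e2 : 2 * (k + 1) + 1 = 2 * k + 1 + 2 := by ring
    rw [e2, e1]
    have hb := J_pos (2 * k + 1 + 2)
    have hc := J_pos (2 * k + 1)
    have hba := J_mono (2 * k + 1 + 1)
    have hac : (∫ x in (0:ℝ)..(π/2), Real.sin x ^ (2 * k + 1 + 1))
        ≤ ∫ x in (0:ℝ)..(π/2), Real.sin x ^ (2 * k + 1) := J_mono (2 * k + 1)
    have hrec := J_rec (2 * k + 1)
    constructor
    · rw [le_div_iff₀ hb, one_mul]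
      calc (∫ x in (0:ℝ)..(π/2), Real.sin x ^ (2 * k + 1 + 2))
          = ∫ x in (0:ℝ)..(π/2), Real.sin x ^ (2 * k + 1 + 1 + 1) := by norm_num
        _ ≤ _ := hba
    · rw [div_le_iff₀ hb]
      have hcast : ((2 * k + 1 : ℕ) : ℝ) = 2 * (k:ℝ) + 1 := by push_cast; ring
      rw [hcast] at hrec
      have hk1 : ((k:ℝ) + 1) > 0 := by positivity
      have : (1 + 1 / (2 * ((k:ℕ):ℝ) + 2)) * ∫ x in (0:ℝ)..(π/2), Real.sin x ^ (2*k+1+2)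
          = ∫ x in (0:ℝ)..(π/2), Real.sin x ^ (2 * k + 1) := by
        rw [hrec]; field_simp; ring
      push_cast
      calc (∫ x in (0:ℝ)..(π/2), Real.sin x ^ (2 * k + 1 + 1))
          ≤ ∫ x in (0:ℝ)..(π/2), Real.sin x ^ (2 * k + 1) := hac
        _ = (1 + 1 / (2 * ((k:ℕ):ℝ) + 2)) * ∫ x in (0:ℝ)..(π/2), Real.sin x ^ (2*k+1+2) :=
            this.symm
        _ = (1 + 1 / (2 * ((k:ℝ) + 1))) * ∫ x in (0:ℝ)..(π/2), Real.sin x ^ (2*k+1+2) := by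
            push_cast
            rw [show 2 * ((k:ℝ) + 1) = 2 * (k:ℝ) + 2 from by ring]
end

section
/- For |x| < 1/2, ∑_{k=0}^∞ C(2k,k) x^(2k)/(2k+1) = arcsin(2x)/(2x) (with the convention that the right-hand side equals 1 at x = 0). -/
open Real

noncomputable def cba (k : ℕ) : ℝ := ((2 * k).choose k : ℝ) / 4 ^ k

lemma cba_nonneg (k : ℕ) : 0 ≤ cba k := by unfold cba; positivity

lemma choose_le_four_pow (k : ℕ) : (2 * k).choose k ≤ 4 ^ k := by
  calc (2 * k).choose k ≤ ∑ m ∈ Finset.range (2 * k + 1), (2 * k).choose m :=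
        Finset.single_le_sum (fun i _ => Nat.zero_le _)
          (Finset.mem_range.2 (by omega))
    _ = 2 ^ (2 * k) := Nat.sum_range_choose (2 * k)
    _ = 4 ^ k := by rw [pow_mul]; norm_num

lemma cba_le_one (k : ℕ) : cba k ≤ 1 := by
  rw [cba, div_le_one (by positivity)]
  exact_mod_cast choose_le_four_pow k

lemma cba_zero : cba 0 = 1 := by simp [cba]

lemma cba_rec (k : ℕ) : 2 * (k + 1 : ℝ) * cba (k + 1) = (2 * k + 1) * cba k := by
  have h := Nat.succ_mul_centralBinom_succ k
  have h' : ((k + 1 : ℕ) * Nat.centralBinom (k + 1) : ℝ)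
      = 2 * (2 * k + 1) * Nat.centralBinom k := by exact_mod_cast h
  simp only [Nat.centralBinom] at h'
  push_cast at h'
  rw [cba, cba, mul_div_assoc', mul_div_assoc',
    div_eq_div_iff (by positivity) (by positivity)]
  linear_combination 2 * (4:ℝ) ^ k * h'

lemma sum_u1 {r : ℝ} (hr0 : 0 ≤ r) (hr1 : r < 1) : Summable fun k : ℕ => r ^ (2 * k) := by
  have : Summable fun k : ℕ => (r ^ 2) ^ k :=
    summable_geometric_of_lt_one (by positivity) (by nlinarith)
  simpa [pow_mul] using this

lemma sum_u2 {r : ℝ} (hr0 : 0 < r) (hr1 : r < 1) :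
    Summable fun k : ℕ => ((2 * k : ℕ) : ℝ) * r ^ (2 * k - 1) := by
  have h1 : Summable fun k : ℕ => (k : ℝ) * (r ^ 2) ^ k := by
    have := summable_pow_mul_geometric_of_norm_lt_one (R := ℝ) 1
      (r := r ^ 2) (by rw [Real.norm_eq_abs, abs_of_nonneg (by positivity)]; nlinarith)
    simpa using this
  refine (h1.mul_left (2 / r)).congr fun k => ?_
  rcases k with _ | n
  · simp
  · have h2 : 2 * (n + 1) - 1 = 2 * n + 1 := by omega
    rw [h2]
    have hrne : r ≠ 0 := ne_of_gt hr0
    push_cast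
    field_simp
    ring

lemma const_of_hasDerivAt_zero {f : ℝ → ℝ} {r y : ℝ} (hr : 0 < r)
    (hf : ∀ z ∈ Set.Ioo (-r) r, HasDerivAt f 0 z) (hy : y ∈ Set.Ioo (-r) r) :
    f y = f 0 := by
  have h0 : (0 : ℝ) ∈ Set.Ioo (-r) r := ⟨by linarith, hr⟩
  apply Convex.is_const_of_fderivWithin_eq_zero (convex_Ioo (-r) r)
    (fun z hz => (hf z hz).differentiableAt.differentiableWithinAt) ?_ hy h0
  intro z hz
  rw [fderivWithin_of_isOpen isOpen_Ioo hz, (hf z hz).hasFDerivAt.fderiv]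
  ext
  simp

set_option maxHeartbeats 2000000 in
lemma arcsin_eq_tsum {y : ℝ} (hy : |y| < 1) :
    arcsin y = ∑' k : ℕ, cba k * y ^ (2 * k + 1) / (2 * k + 1) := by
  set r : ℝ := (1 + |y|) / 2 with hrdef
  have hr0 : 0 < r := by positivity
  have hr1 : r < 1 := by rw [hrdef]; linarith
  have hyr : |y| < r := by rw [hrdef]; linarith [abs_nonneg y]
  have hyt : y ∈ Set.Ioo (-r) r := by
    rcases abs_lt.mp hyr with ⟨h1, h2⟩; exact ⟨h1, h2⟩
  have h0t : (0 : ℝ) ∈ Set.Ioo (-r) r := ⟨by linarith, hr0⟩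
  have hzr : ∀ z ∈ Set.Ioo (-r) r, |z| ≤ r := fun z hz => le_of_lt (abs_lt.2 ⟨hz.1, hz.2⟩)
  -- term derivatives
  have hderivF : ∀ (k : ℕ) (z : ℝ),
      HasDerivAt (fun w => cba k * w ^ (2 * k + 1) / (2 * k + 1)) (cba k * z ^ (2 * k)) z := by
    intro k z
    have e1 : (fun w : ℝ => cba k * w ^ (2 * k + 1) / (2 * k + 1))
        = fun w => (cba k / (2 * k + 1)) * w ^ (2 * k + 1) := by funext w; ring
    rw [e1]
    have h := (hasDerivAt_pow (2 * k + 1) z).const_mul (cba k / (2 * k + 1))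
    convert h using 1 <;> try rfl
    have hne : (2 * (k : ℝ) + 1) ≠ 0 := by positivity
    push_cast
    field_simp
  have hderivG : ∀ (k : ℕ) (z : ℝ),
      HasDerivAt (fun w => cba k * w ^ (2 * k)) (cba k * ((2 * k : ℕ) * z ^ (2 * k - 1))) z :=
    fun k z => (hasDerivAt_pow (2 * k) z).const_mul (cba k)
  -- bounds
  have hboundG : ∀ (k : ℕ), ∀ z ∈ Set.Ioo (-r) r, ‖cba k * z ^ (2 * k)‖ ≤ r ^ (2 * k) := by
    intro k z hz
    rw [Real.norm_eq_abs, abs_mul, abs_of_nonneg (cba_nonneg k), abs_pow]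
    calc cba k * |z| ^ (2 * k) ≤ 1 * r ^ (2 * k) := by
          gcongr <;> first | exact abs_nonneg z | exact cba_le_one k | exact hzr z hz
      _ = r ^ (2 * k) := one_mul _
  have hboundG1 : ∀ (k : ℕ), ∀ z ∈ Set.Ioo (-r) r,
      ‖cba k * ((2 * k : ℕ) * z ^ (2 * k - 1))‖ ≤ ((2 * k : ℕ) : ℝ) * r ^ (2 * k - 1) := by
    intro k z hz
    rw [Real.norm_eq_abs, abs_mul, abs_of_nonneg (cba_nonneg k), abs_mul, Nat.abs_cast, abs_pow]
    calc cba k * (((2 * k : ℕ) : ℝ) * |z| ^ (2 * k - 1))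
        ≤ 1 * (((2 * k : ℕ) : ℝ) * r ^ (2 * k - 1)) := by
          gcongr <;> first | exact abs_nonneg z | exact cba_le_one k | exact hzr z hz
      _ = _ := one_mul _
  -- derivative of F
  have hF : ∀ z ∈ Set.Ioo (-r) r,
      HasDerivAt (fun w => ∑' k : ℕ, cba k * w ^ (2 * k + 1) / (2 * k + 1))
        (∑' k : ℕ, cba k * z ^ (2 * k)) z := by
    intro z hz
    refine hasDerivAt_tsum_of_isPreconnected (g := fun k w => cba k * w ^ (2 * k + 1) / (2 * k + 1))
      (g' := fun k w => cba k * w ^ (2 * k)) (sum_u1 hr0.le hr1) isOpen_Ioo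
      (convex_Ioo _ _).isPreconnected (fun k w _ => hderivF k w)
      (fun k w hw => hboundG k w hw) h0t ?_ hz
    exact summable_zero.congr fun k => by simp
  -- derivative of G
  have hG : ∀ z ∈ Set.Ioo (-r) r,
      HasDerivAt (fun w => ∑' k : ℕ, cba k * w ^ (2 * k))
        (∑' k : ℕ, cba k * ((2 * k : ℕ) * z ^ (2 * k - 1))) z := by
    intro z hz
    refine hasDerivAt_tsum_of_isPreconnected (g := fun k w => cba k * w ^ (2 * k))
      (g' := fun k w => cba k * ((2 * k : ℕ) * w ^ (2 * k - 1))) (sum_u2 hr0 hr1) isOpen_Ioo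
      (convex_Ioo _ _).isPreconnected (fun k w _ => hderivG k w)
      (fun k w hw => hboundG1 k w hw) h0t ?_ hz
    refine summable_of_ne_finset_zero (s := {0}) fun k hk => ?_
    have hk0 : k ≠ 0 := by simpa using hk
    simp [zero_pow, Nat.mul_ne_zero two_ne_zero hk0]
  -- pointwise summabilities
  have SG1 : ∀ z ∈ Set.Ioo (-r) r,
      Summable fun k : ℕ => cba k * ((2 * k : ℕ) * z ^ (2 * k - 1)) := fun z hz =>
    (sum_u2 hr0 hr1).of_norm_bounded fun k => hboundG1 k z hz
  -- term identities
  have hterm : ∀ (z : ℝ) (k : ℕ),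
      cba (k + 1) * ((2 * (k + 1) : ℕ) * z ^ (2 * (k + 1) - 1))
        = (2 * k + 1 : ℝ) * cba k * z ^ (2 * k + 1) := by
    intro z k
    have h2 : 2 * (k + 1) - 1 = 2 * k + 1 := by omega
    rw [h2]
    have h := cba_rec k
    push_cast
    linear_combination z ^ (2 * k + 1) * h
  have hterm2 : ∀ (z : ℝ) (k : ℕ),
      z ^ 2 * (cba k * ((2 * k : ℕ) * z ^ (2 * k - 1)))
        = (2 * k : ℝ) * cba k * z ^ (2 * k + 1) := by
    intro z k
    rcases k with _ | n
    · simp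
    · have h2 : 2 * (n + 1) - 1 = 2 * n + 1 := by omega
      have h3 : 2 * (n + 1) + 1 = (2 * n + 1) + 2 := by omega
      rw [h2, h3, pow_add]
      push_cast
      ring
  -- the key ODE identity
  have hkey : ∀ z ∈ Set.Ioo (-r) r,
      (1 - z ^ 2) * (∑' k : ℕ, cba k * ((2 * k : ℕ) * z ^ (2 * k - 1)))
        = z * ∑' k : ℕ, cba k * z ^ (2 * k) := by
    intro z hz
    have S1 := SG1 z hz
    have S2 : Summable fun k : ℕ => (2 * (k : ℝ) + 1) * cba k * z ^ (2 * k + 1) :=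
      ((summable_nat_add_iff 1).2 S1).congr fun k => hterm z k
    have S3 : Summable fun k : ℕ => (2 * (k : ℝ)) * cba k * z ^ (2 * k + 1) :=
      (S1.mul_left (z ^ 2)).congr fun k => hterm2 z k
    have hshift : (∑' k : ℕ, cba k * ((2 * k : ℕ) * z ^ (2 * k - 1)))
        = ∑' k : ℕ, (2 * (k : ℝ) + 1) * cba k * z ^ (2 * k + 1) := by
      rw [S1.tsum_eq_zero_add,
        show cba 0 * (((2 * 0 : ℕ) : ℝ) * z ^ (2 * 0 - 1)) = 0 by norm_num, zero_add]
      exact tsum_congr fun k => hterm z k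
    have hz2 : z ^ 2 * (∑' k : ℕ, cba k * ((2 * k : ℕ) * z ^ (2 * k - 1)))
        = ∑' k : ℕ, (2 * (k : ℝ)) * cba k * z ^ (2 * k + 1) := by
      rw [← tsum_mul_left]
      exact tsum_congr fun k => hterm2 z k
    have hzG : z * (∑' k : ℕ, cba k * z ^ (2 * k)) = ∑' k : ℕ, cba k * z ^ (2 * k + 1) := by
      rw [← tsum_mul_left]
      exact tsum_congr fun k => by rw [pow_succ]; ring
    calc (1 - z ^ 2) * (∑' k : ℕ, cba k * ((2 * k : ℕ) * z ^ (2 * k - 1)))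
        = (∑' k : ℕ, cba k * ((2 * k : ℕ) * z ^ (2 * k - 1)))
          - z ^ 2 * (∑' k : ℕ, cba k * ((2 * k : ℕ) * z ^ (2 * k - 1))) := by ring
      _ = (∑' k : ℕ, (2 * (k : ℝ) + 1) * cba k * z ^ (2 * k + 1))
          - ∑' k : ℕ, (2 * (k : ℝ)) * cba k * z ^ (2 * k + 1) := by rw [hz2, hshift]
      _ = ∑' k : ℕ, ((2 * (k : ℝ) + 1) * cba k * z ^ (2 * k + 1)
          - (2 * (k : ℝ)) * cba k * z ^ (2 * k + 1)) := (S2.tsum_sub S3).symm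
      _ = ∑' k : ℕ, cba k * z ^ (2 * k + 1) := tsum_congr fun k => by ring
      _ = z * ∑' k : ℕ, cba k * z ^ (2 * k) := hzG.symm
  have hsq : ∀ z ∈ Set.Ioo (-r) r, 0 < 1 - z ^ 2 := by
    intro z hz
    have h1 : |z| < 1 := lt_trans (abs_lt.2 ⟨hz.1, hz.2⟩) hr1
    nlinarith [sq_abs z, abs_nonneg z]
  have hsqrtD : ∀ z ∈ Set.Ioo (-r) r,
      HasDerivAt (fun w => Real.sqrt (1 - w ^ 2)) (-z / Real.sqrt (1 - z ^ 2)) z := by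
    intro z hz
    have hpos := hsq z hz
    have h1 : HasDerivAt (fun w : ℝ => 1 - w ^ 2) (-(2 * z)) z := by
      simpa using (hasDerivAt_pow 2 z).const_sub 1
    have h2 := (Real.hasDerivAt_sqrt (ne_of_gt hpos)).comp z h1
    convert h2 using 1 <;> try rfl
    have hs : Real.sqrt (1 - z ^ 2) ≠ 0 := by positivity
    field_simp
  have hG0val : (∑' k : ℕ, cba k * (0 : ℝ) ^ (2 * k)) = 1 := by
    rw [tsum_eq_single 0 (fun k hk => by simp [zero_pow, Nat.mul_ne_zero two_ne_zero hk])]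
    simp [cba_zero]
  have hHzero : ∀ z ∈ Set.Ioo (-r) r,
      HasDerivAt (fun w => (∑' k : ℕ, cba k * w ^ (2 * k)) * Real.sqrt (1 - w ^ 2)) 0 z := by
    intro z hz
    have h := (hG z hz).mul (hsqrtD z hz)
    convert h using 1 <;> try rfl
    have hpos := hsq z hz
    have hs : Real.sqrt (1 - z ^ 2) ≠ 0 := by positivity
    have hss : Real.sqrt (1 - z ^ 2) ^ 2 = 1 - z ^ 2 := Real.sq_sqrt hpos.le
    have hk := hkey z hz
    have key2 : ((∑' k : ℕ, cba k * ((2 * k : ℕ) * z ^ (2 * k - 1))) * Real.sqrt (1 - z ^ 2)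
        + (∑' k : ℕ, cba k * z ^ (2 * k)) * (-z / Real.sqrt (1 - z ^ 2)))
        * Real.sqrt (1 - z ^ 2) = 0 := by
      rw [add_mul, mul_assoc (∑' k : ℕ, cba k * z ^ (2 * k)) _ (Real.sqrt (1 - z ^ 2)),
        div_mul_cancel₀ _ hs]
      linear_combination hk + (∑' k : ℕ, cba k * ((2 * k : ℕ) * z ^ (2 * k - 1))) * hss
    exact ((mul_eq_zero.mp key2).resolve_right hs).symm
  have hGval : ∀ z ∈ Set.Ioo (-r) r,
      (∑' k : ℕ, cba k * z ^ (2 * k)) = 1 / Real.sqrt (1 - z ^ 2) := by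
    intro z hz
    have hpos := hsq z hz
    have hs : Real.sqrt (1 - z ^ 2) ≠ 0 := by positivity
    have hc := const_of_hasDerivAt_zero hr0 hHzero hz
    simp only [hG0val] at hc
    rw [eq_div_iff hs]
    rw [hc]
    norm_num
  have harc : ∀ z ∈ Set.Ioo (-r) r,
      HasDerivAt (fun w => (∑' k : ℕ, cba k * w ^ (2 * k + 1) / (2 * k + 1)) - arcsin w) 0 z := by
    intro z hz
    have hz1 : |z| < 1 := lt_trans (abs_lt.2 ⟨hz.1, hz.2⟩) hr1
    have h2 := Real.hasDerivAt_arcsin (abs_lt.mp hz1).1.ne' (abs_lt.mp hz1).2.ne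
    have h := (hF z hz).sub h2
    convert h using 1 <;> try rfl
    rw [hGval z hz]
    ring
  have hc := const_of_hasDerivAt_zero hr0 harc hyt
  have hF0 : (∑' k : ℕ, cba k * (0 : ℝ) ^ (2 * k + 1) / (2 * k + 1)) = 0 := by
    simp
  rw [hF0, Real.arcsin_zero, sub_zero] at hc
  linarith [hc]

theorem central_binomial_arcsin_series (x : ℝ) (hx : |x| < 1 / 2) :
    ∑' k : ℕ, ((2 * k).choose k : ℝ) * x ^ (2 * k) / (2 * k + 1) =
      if x = 0 then 1 else arcsin (2 * x) / (2 * x) := by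
  by_cases hx0 : x = 0
  · subst hx0
    rw [if_pos rfl,
      tsum_eq_single 0 (fun k hk => by simp [zero_pow, Nat.mul_ne_zero two_ne_zero hk])]
    norm_num
  · rw [if_neg hx0]
    have h2x : |2 * x| < 1 := by
      rw [abs_mul]
      rw [abs_of_nonneg (by norm_num : (0:ℝ) ≤ 2)]
      linarith
    have harc := arcsin_eq_tsum h2x
    have hS : (∑' k : ℕ, cba k * (2 * x) ^ (2 * k + 1) / (2 * k + 1))
        = (2 * x) * ∑' k : ℕ, ((2 * k).choose k : ℝ) * x ^ (2 * k) / (2 * k + 1) := by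
      rw [← tsum_mul_left]
      refine tsum_congr fun k => ?_
      rw [cba]
      have h4 : (4 : ℝ) ^ k ≠ 0 := by positivity
      have h2p : (2 : ℝ) ^ (2 * k + 1) = 2 * 4 ^ k := by
        rw [pow_succ, pow_mul]
        norm_num [mul_comm]
      have hpow : ((2 : ℝ) * x) ^ (2 * k + 1) = 2 * 4 ^ k * (x ^ (2 * k) * x) := by
        rw [mul_pow, h2p, pow_succ]
      rw [hpow]
      field_simp
    rw [harc, hS, mul_comm, mul_div_assoc, div_self (by simpa using hx0 : (2:ℝ) * x ≠ 0),
      mul_one]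
end

section
/- Let q₁, ..., qₙ be distinct complex numbers with positive real part. Then (2/π) ∫₀^∞ ∏_{k=1}^n (x² + q_k²)^{-1} dx = ∑_{k=1}^n (1/q_k) ∏_{j≠k} 1/(q_j² − q_k²). -/
open MeasureTheory Real

lemma denom_ne_zero {q : ℂ} (hq : 0 < q.re) (x : ℝ) : (x:ℂ) ^ 2 + q ^ 2 ≠ 0 := by
  intro h
  rw [Complex.ext_iff] at h
  simp only [pow_two, Complex.add_re, Complex.add_im, Complex.mul_re, Complex.mul_im,
    Complex.ofReal_re, Complex.ofReal_im, Complex.zero_re, Complex.zero_im] at h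
  obtain ⟨h1, h2⟩ := h
  have him : q.im = 0 := by
    rcases mul_eq_zero.mp (by linarith : q.re * q.im = 0) with h | h
    · exact absurd h hq.ne'
    · exact h
  rw [him] at h1
  nlinarith [sq_nonneg x, hq]

lemma q_ne_zero {q : ℂ} (hq : 0 < q.re) : q ≠ 0 := by
  intro h; rw [h] at hq; simp at hq

lemma sub_I_mul_slit {q : ℂ} (hq : 0 < q.re) (x : ℝ) :
    (x:ℂ) - Complex.I * q ∈ Complex.slitPlane := by
  rw [Complex.mem_slitPlane_iff]
  right
  simp only [Complex.sub_im, Complex.mul_im, Complex.ofReal_im, Complex.I_re, Complex.I_im,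
    zero_mul, one_mul, zero_add, zero_sub, ne_eq, neg_eq_zero]
  exact hq.ne'

lemma add_I_mul_slit {q : ℂ} (hq : 0 < q.re) (x : ℝ) :
    (x:ℂ) + Complex.I * q ∈ Complex.slitPlane := by
  rw [Complex.mem_slitPlane_iff]
  right
  simp only [Complex.add_im, Complex.mul_im, Complex.ofReal_im, Complex.I_re, Complex.I_im,
    zero_mul, one_mul, zero_add, ne_eq]
  exact hq.ne'

lemma sub_I_mul_ne_zero {q : ℂ} (hq : 0 < q.re) (x : ℝ) : (x:ℂ) - Complex.I * q ≠ 0 :=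
  Complex.slitPlane_ne_zero (sub_I_mul_slit hq x)

lemma add_I_mul_ne_zero {q : ℂ} (hq : 0 < q.re) (x : ℝ) : (x:ℂ) + Complex.I * q ≠ 0 :=
  Complex.slitPlane_ne_zero (add_I_mul_slit hq x)

lemma factor_denom {q : ℂ} (x : ℝ) :
    ((x:ℂ) - Complex.I * q) * ((x:ℂ) + Complex.I * q) = (x:ℂ) ^ 2 + q ^ 2 := by
  linear_combination (-(q ^ 2)) * Complex.I_sq

lemma integrable_single {q : ℂ} (hq : 0 < q.re) :
    MeasureTheory.IntegrableOn (fun x : ℝ => ((x:ℂ) ^ 2 + q ^ 2)⁻¹) (Set.Ioi 0) := by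
  have hcont : Continuous (fun x : ℝ => ((x:ℂ) ^ 2 + q ^ 2)⁻¹) := by
    apply Continuous.inv₀
    · continuity
    · exact fun x => denom_ne_zero hq x
  set A : ℝ := ‖q ^ 2‖ with hA
  have hA0 : 0 ≤ A := norm_nonneg _
  set R : ℝ := A + 1 with hR
  have hR0 : (0:ℝ) < R := by positivity
  have h1 : MeasureTheory.IntegrableOn (fun x : ℝ => ((x:ℂ) ^ 2 + q ^ 2)⁻¹) (Set.Ioc 0 R) :=
    hcont.integrableOn_Ioc
  have h2 : MeasureTheory.IntegrableOn (fun x : ℝ => ((x:ℂ) ^ 2 + q ^ 2)⁻¹) (Set.Ioi R) := by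
    have hmaj : MeasureTheory.IntegrableOn (fun x : ℝ => 2 * x ^ (-2:ℝ)) (Set.Ioi R) :=
      (integrableOn_Ioi_rpow_of_lt (by norm_num) hR0).const_mul 2
    refine hmaj.mono' (hcont.aestronglyMeasurable.restrict) ?_
    rw [ae_restrict_iff' measurableSet_Ioi]
    filter_upwards with x hx
    have hxR : R < x := hx
    have hx0 : (0:ℝ) < x := lt_trans hR0 hxR
    have hlow : x ^ 2 / 2 ≤ ‖(x:ℂ) ^ 2 + q ^ 2‖ := by
      have key : ‖(x:ℂ) ^ 2‖ ≤ ‖(x:ℂ) ^ 2 + q ^ 2‖ + A := by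
        calc ‖(x:ℂ) ^ 2‖ = ‖((x:ℂ) ^ 2 + q ^ 2) + (-(q ^ 2))‖ := by
              ring_nf
          _ ≤ ‖(x:ℂ) ^ 2 + q ^ 2‖ + ‖-(q ^ 2)‖ :=
              norm_add_le _ _
          _ = ‖(x:ℂ) ^ 2 + q ^ 2‖ + A := by rw [norm_neg]
      have habs : ‖(x:ℂ) ^ 2‖ = x ^ 2 := by
        rw [norm_pow, Complex.norm_real, Real.norm_eq_abs, sq_abs]
      have h2A : 2 * A ≤ x ^ 2 := by nlinarith
      nlinarith [key, habs]
    have hpos : (0:ℝ) < x ^ 2 / 2 := by positivity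
    have hnorm : ‖((x:ℂ) ^ 2 + q ^ 2)⁻¹‖ ≤ 2 * x ^ (-2:ℝ) := by
      rw [norm_inv]
      have hrp : x ^ (-2:ℝ) = (x ^ 2)⁻¹ := by
        rw [Real.rpow_neg hx0.le]
        norm_num [Real.rpow_two]
      rw [hrp]
      calc ‖(x:ℂ) ^ 2 + q ^ 2‖⁻¹ ≤ (x ^ 2 / 2)⁻¹ := inv_anti₀ hpos hlow
        _ = 2 * (x ^ 2)⁻¹ := by field_simp
    exact hnorm
  have := h1.union h2
  rwa [Set.Ioc_union_Ioi_eq_Ioi hR0.le] at this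

lemma integral_single {q : ℂ} (hq : 0 < q.re) :
    ∫ x in Set.Ioi (0:ℝ), ((x:ℂ) ^ 2 + q ^ 2)⁻¹ = (π : ℂ) / (2 * q) := by
  have hq0 : q ≠ 0 := q_ne_zero hq
  have hIq : Complex.I * q ≠ 0 := mul_ne_zero Complex.I_ne_zero hq0
  set c : ℂ := (2 * Complex.I * q)⁻¹ with hc
  have hc0 : (2 * Complex.I * q) ≠ 0 := by
    apply mul_ne_zero (mul_ne_zero two_ne_zero Complex.I_ne_zero) hq0
  set F : ℝ → ℂ := fun x =>
    c * (Complex.log ((x:ℂ) - Complex.I * q) - Complex.log ((x:ℂ) + Complex.I * q)) with hF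
  have hderiv : ∀ x ∈ Set.Ioi (0:ℝ), HasDerivAt F (((x:ℂ) ^ 2 + q ^ 2)⁻¹) x := by
    intro x _
    have hd1 : HasDerivAt (fun y : ℝ => Complex.log ((y:ℂ) - Complex.I * q))
        (((x:ℂ) - Complex.I * q)⁻¹) x := by
      have hinner : HasDerivAt (fun z : ℂ => z - Complex.I * q) 1 (x:ℂ) :=
        (hasDerivAt_id _).sub_const _
      have := (Complex.hasDerivAt_log (sub_I_mul_slit hq x)).comp (x:ℂ) hinner
      simpa using this.comp_ofReal
    have hd2 : HasDerivAt (fun y : ℝ => Complex.log ((y:ℂ) + Complex.I * q))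
        (((x:ℂ) + Complex.I * q)⁻¹) x := by
      have hinner : HasDerivAt (fun z : ℂ => z + Complex.I * q) 1 (x:ℂ) :=
        (hasDerivAt_id _).add_const _
      have := (Complex.hasDerivAt_log (add_I_mul_slit hq x)).comp (x:ℂ) hinner
      simpa using this.comp_ofReal
    have h1 := sub_I_mul_ne_zero hq x
    have h2 := add_I_mul_ne_zero hq x
    have hdiff : ((x:ℂ) - Complex.I * q)⁻¹ - ((x:ℂ) + Complex.I * q)⁻¹ =
        (2 * Complex.I * q) * ((x:ℂ) ^ 2 + q ^ 2)⁻¹ := by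
      rw [← factor_denom (q := q) x]
      field_simp
      ring
    have := ((hd1.sub hd2).const_mul c)
    rw [hdiff, hc, ← mul_assoc, inv_mul_cancel₀ hc0, one_mul] at this
    exact this
  have hcont : ContinuousWithinAt F (Set.Ici 0) 0 := by
    apply ContinuousAt.continuousWithinAt
    apply ContinuousAt.mul continuousAt_const
    apply ContinuousAt.sub
    · exact ContinuousAt.clog
        ((Complex.continuous_ofReal.continuousAt).sub continuousAt_const)
        (sub_I_mul_slit hq 0)
    · exact ContinuousAt.clog
        ((Complex.continuous_ofReal.continuousAt).add continuousAt_const)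
        (add_I_mul_slit hq 0)
  have htop : Filter.Tendsto F Filter.atTop (nhds 0) := by
    have hEq : (fun x : ℝ => c * (Complex.log (1 - Complex.I * q / (x:ℂ)) -
             Complex.log (1 + Complex.I * q / (x:ℂ)))) =ᶠ[Filter.atTop] F := by
      filter_upwards [Filter.eventually_gt_atTop (0:ℝ)] with x hx
      have hx0 : (x:ℂ) ≠ 0 := Complex.ofReal_ne_zero.mpr hx.ne'
      have e1 : (x:ℂ) - Complex.I * q = (x:ℝ) * (1 - Complex.I * q / (x:ℂ)) := by
        field_simp
      have e2 : (x:ℂ) + Complex.I * q = (x:ℝ) * (1 + Complex.I * q / (x:ℂ)) := by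
        field_simp
      have hne1 : (1 - Complex.I * q / (x:ℂ)) ≠ 0 := by
        intro h
        have := sub_I_mul_ne_zero hq x
        rw [e1, h, mul_zero] at this
        exact this rfl
      have hne2 : (1 + Complex.I * q / (x:ℂ)) ≠ 0 := by
        intro h
        have := add_I_mul_ne_zero hq x
        rw [e2, h, mul_zero] at this
        exact this rfl
      rw [hF]
      simp only
      rw [e1, e2, Complex.log_ofReal_mul hx hne1, Complex.log_ofReal_mul hx hne2]
      ring
    have hlim1 : Filter.Tendsto (fun x : ℝ => 1 - Complex.I * q / (x:ℂ))
        Filter.atTop (nhds 1) := by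
      have hz : Filter.Tendsto (fun x : ℝ => Complex.I * q / (x:ℂ)) Filter.atTop (nhds 0) := by
        have h0 : Filter.Tendsto (fun x : ℝ => ((x:ℂ))⁻¹) Filter.atTop (nhds 0) := by
          have h := (Complex.continuous_ofReal.tendsto 0).comp
            (tendsto_inv_atTop_zero (𝕜 := ℝ))
          simpa using h.congr fun x => Complex.ofReal_inv x
        have := h0.const_mul (Complex.I * q)
        simpa [div_eq_mul_inv] using this
      have := (tendsto_const_nhds (x := (1:ℂ)) (f := Filter.atTop (α := ℝ))).sub hz
      simpa using this
    have hlim2 : Filter.Tendsto (fun x : ℝ => 1 + Complex.I * q / (x:ℂ))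
        Filter.atTop (nhds 1) := by
      have hz : Filter.Tendsto (fun x : ℝ => Complex.I * q / (x:ℂ)) Filter.atTop (nhds 0) := by
        have h0 : Filter.Tendsto (fun x : ℝ => ((x:ℂ))⁻¹) Filter.atTop (nhds 0) := by
          have h := (Complex.continuous_ofReal.tendsto 0).comp
            (tendsto_inv_atTop_zero (𝕜 := ℝ))
          simpa using h.congr fun x => Complex.ofReal_inv x
        have := h0.const_mul (Complex.I * q)
        simpa [div_eq_mul_inv] using this
      have := (tendsto_const_nhds (x := (1:ℂ)) (f := Filter.atTop (α := ℝ))).add hz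
      simpa using this
    have hslit1 : (1:ℂ) ∈ Complex.slitPlane := by
      rw [Complex.mem_slitPlane_iff]; left; norm_num
    have hlog1 := hlim1.clog hslit1
    have hlog2 := hlim2.clog hslit1
    rw [Complex.log_one] at hlog1 hlog2
    have := ((hlog1.sub hlog2).const_mul c)
    rw [sub_zero, mul_zero] at this
    exact this.congr' hEq
  have key := MeasureTheory.integral_Ioi_of_hasDerivAt_of_tendsto hcont hderiv
    (integrable_single hq) htop
  rw [key]
  have hF0 : F 0 = -((π : ℂ) / (2 * q)) := by
    have him : 0 < (Complex.I * q).im := by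
      simpa [Complex.mul_im] using hq
    have hlogneg : Complex.log (-(Complex.I * q)) =
        Complex.log (Complex.I * q) - (π : ℂ) * Complex.I := by
      rw [Complex.log, Complex.log, norm_neg,
        Complex.arg_neg_eq_arg_sub_pi_of_im_pos him]
      push_cast
      ring
    rw [hF]
    simp only [Complex.ofReal_zero, zero_sub, zero_add]
    rw [hlogneg]
    rw [hc]
    have : Complex.log (Complex.I * q) - (π:ℂ) * Complex.I - Complex.log (Complex.I * q) =
        -((π:ℂ) * Complex.I) := by ring
    rw [this]
    field_simp
  rw [hF0, zero_sub, neg_neg]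

lemma key_sum {n : ℕ} [NeZero n] (q : Fin n → ℂ)
    (hdist : ∀ j k, j ≠ k → q j ^ 2 ≠ q k ^ 2) (t : ℂ) :
    ∑ k, ∏ j ∈ Finset.univ.erase k, ((q j ^ 2 - q k ^ 2)⁻¹ * (t + q j ^ 2)) = 1 := by
  set v : Fin n → ℂ := fun k => -(q k ^ 2) with hv
  have hinj : Set.InjOn v (Finset.univ : Finset (Fin n)) := by
    intro j _ k _ h
    by_contra hne
    exact hdist j k hne (by rw [hv] at h; simpa using neg_injective h)
  have hs : (Finset.univ : Finset (Fin n)).Nonempty := Finset.univ_nonempty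
  have hsum := Lagrange.sum_basis hinj hs
  have := congrArg (Polynomial.eval t) hsum
  rw [Polynomial.eval_finset_sum, Polynomial.eval_one] at this
  rw [← this]
  apply Finset.sum_congr rfl
  intro k _
  rw [Lagrange.basis, Polynomial.eval_prod]
  apply Finset.prod_congr rfl
  intro j _
  rw [Lagrange.basisDivisor]
  simp only [Polynomial.eval_mul, Polynomial.eval_C, Polynomial.eval_sub, Polynomial.eval_X,
    hv]
  congr 1
  · congr 1; ring
  · ring

lemma partial_fractions {n : ℕ} [NeZero n] (q : Fin n → ℂ)
    (hre : ∀ k, 0 < (q k).re)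
    (hdist : ∀ j k, j ≠ k → q j ^ 2 ≠ q k ^ 2) (x : ℝ) :
    ∏ k, ((x:ℂ) ^ 2 + q k ^ 2)⁻¹ =
      ∑ k, ((x:ℂ) ^ 2 + q k ^ 2)⁻¹ * ∏ j ∈ Finset.univ.erase k, (q j ^ 2 - q k ^ 2)⁻¹ := by
  have key := key_sum q hdist ((x:ℂ) ^ 2)
  calc ∏ k, ((x:ℂ) ^ 2 + q k ^ 2)⁻¹
      = (∑ k, ∏ j ∈ Finset.univ.erase k,
          ((q j ^ 2 - q k ^ 2)⁻¹ * ((x:ℂ) ^ 2 + q j ^ 2))) * ∏ k, ((x:ℂ) ^ 2 + q k ^ 2)⁻¹ := by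
        rw [key, one_mul]
    _ = ∑ k, ((x:ℂ) ^ 2 + q k ^ 2)⁻¹ * ∏ j ∈ Finset.univ.erase k, (q j ^ 2 - q k ^ 2)⁻¹ := by
        rw [Finset.sum_mul]
        apply Finset.sum_congr rfl
        intro k _
        rw [Finset.prod_mul_distrib]
        have hsplit : ∏ j, ((x:ℂ) ^ 2 + q j ^ 2)⁻¹ =
            ((x:ℂ) ^ 2 + q k ^ 2)⁻¹ * ∏ j ∈ Finset.univ.erase k, ((x:ℂ) ^ 2 + q j ^ 2)⁻¹ :=
          (Finset.mul_prod_erase _ _ (Finset.mem_univ k)).symm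
        rw [hsplit]
        have hcancel : (∏ j ∈ Finset.univ.erase k, ((x:ℂ) ^ 2 + q j ^ 2)) *
            ∏ j ∈ Finset.univ.erase k, ((x:ℂ) ^ 2 + q j ^ 2)⁻¹ = 1 := by
          rw [← Finset.prod_mul_distrib]
          exact Finset.prod_eq_one fun j _ => mul_inv_cancel₀ (denom_ne_zero (hre j) x)
        calc (∏ j ∈ Finset.univ.erase k, (q j ^ 2 - q k ^ 2)⁻¹) *
              (∏ j ∈ Finset.univ.erase k, ((x:ℂ) ^ 2 + q j ^ 2)) *
              (((x:ℂ) ^ 2 + q k ^ 2)⁻¹ * ∏ j ∈ Finset.univ.erase k, ((x:ℂ) ^ 2 + q j ^ 2)⁻¹)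
            = ((x:ℂ) ^ 2 + q k ^ 2)⁻¹ * (∏ j ∈ Finset.univ.erase k, (q j ^ 2 - q k ^ 2)⁻¹) *
              ((∏ j ∈ Finset.univ.erase k, ((x:ℂ) ^ 2 + q j ^ 2)) *
               ∏ j ∈ Finset.univ.erase k, ((x:ℂ) ^ 2 + q j ^ 2)⁻¹) := by ring
          _ = ((x:ℂ) ^ 2 + q k ^ 2)⁻¹ * ∏ j ∈ Finset.univ.erase k, (q j ^ 2 - q k ^ 2)⁻¹ := by
              rw [hcancel, mul_one]

theorem Gn_partial_fractions (n : ℕ) (q : Fin n → ℂ)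
    (hre : ∀ k, 0 < (q k).re)
    (hdist : ∀ j k, j ≠ k → q j ^ 2 ≠ q k ^ 2) :
    (2 / (π:ℂ)) * ∫ x in Set.Ioi (0:ℝ), ∏ k, ((x:ℂ) ^ 2 + q k ^ 2)⁻¹ =
      ∑ k, (q k)⁻¹ * ∏ j ∈ Finset.univ.erase k, (q j ^ 2 - q k ^ 2)⁻¹ := by
  rcases Nat.eq_zero_or_pos n with hn | hn
  · subst hn
    have : ¬ MeasureTheory.Integrable (fun _ : ℝ => (1:ℂ))
        (MeasureTheory.volume.restrict (Set.Ioi (0:ℝ))) := by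
      rw [MeasureTheory.integrable_const_iff]
      push_neg
      constructor
      · norm_num
      · rw [MeasureTheory.isFiniteMeasure_restrict]; simp [Real.volume_Ioi]
    simp [MeasureTheory.integral_undef this]
  · have : NeZero n := ⟨hn.ne'⟩
    have hπ : (π : ℂ) ≠ 0 := by
      exact_mod_cast Complex.ofReal_ne_zero.mpr Real.pi_ne_zero
    have hint : ∀ k : Fin n, MeasureTheory.Integrable
        (fun x : ℝ => ((x:ℂ) ^ 2 + q k ^ 2)⁻¹ *
          ∏ j ∈ Finset.univ.erase k, (q j ^ 2 - q k ^ 2)⁻¹)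
        (MeasureTheory.volume.restrict (Set.Ioi (0:ℝ))) := by
      intro k
      exact (integrable_single (hre k)).mul_const _
    have hrw : ∫ x in Set.Ioi (0:ℝ), ∏ k, ((x:ℂ) ^ 2 + q k ^ 2)⁻¹ =
        ∫ x in Set.Ioi (0:ℝ), ∑ k, ((x:ℂ) ^ 2 + q k ^ 2)⁻¹ *
          ∏ j ∈ Finset.univ.erase k, (q j ^ 2 - q k ^ 2)⁻¹ := by
      congr 1
      funext x
      exact partial_fractions q hre hdist x
    rw [hrw, MeasureTheory.integral_finset_sum _ (fun k _ => hint k)]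
    rw [Finset.mul_sum]
    apply Finset.sum_congr rfl
    intro k _
    rw [MeasureTheory.integral_mul_const, integral_single (hre k)]
    have hqk : q k ≠ 0 := q_ne_zero (hre k)
    rw [← mul_assoc]
    congr 1
    field_simp
end

section
/- For every nonnegative integer n, (2/π) ∫₀^∞ ∏_{j=1}^{n+1} 1/(x² + j²) dx = 1/((2n+1) · n! · (n+1)!). -/
open MeasureTheory Real Filter Set Finset Polynomial

lemma aux_hasDeriv (a : ℝ) (ha : 0 < a) (x : ℝ) :
    HasDerivAt (fun x : ℝ => a⁻¹ * arctan (x / a)) ((x ^ 2 + a ^ 2)⁻¹) x := by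
  have h1 : HasDerivAt (fun x : ℝ => x / a) (1 / a) x := (hasDerivAt_id x).div_const a
  have h2 := (Real.hasDerivAt_arctan (x / a)).comp x h1
  have h3 := h2.const_mul a⁻¹
  refine h3.congr_deriv ?_
  field_simp
  ring

lemma aux_tendsto (a : ℝ) (ha : 0 < a) :
    Tendsto (fun x : ℝ => a⁻¹ * arctan (x / a)) atTop (nhds (a⁻¹ * (π / 2))) := by
  have h : Tendsto (fun x : ℝ => x / a) atTop atTop := tendsto_id.atTop_div_const ha
  have := (tendsto_arctan_atTop.comp h).mono_right nhdsWithin_le_nhds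
  exact this.const_mul _

lemma aux_integrable (a : ℝ) (ha : 0 < a) :
    IntegrableOn (fun x : ℝ => (x ^ 2 + a ^ 2)⁻¹) (Ioi 0) := by
  exact integrableOn_Ioi_deriv_of_nonneg' (g := fun x : ℝ => a⁻¹ * arctan (x / a))
    (fun x _ => aux_hasDeriv a ha x) (fun x _ => by positivity) (aux_tendsto a ha)

lemma aux_integral (a : ℝ) (ha : 0 < a) :
    ∫ x in Ioi (0:ℝ), (x ^ 2 + a ^ 2)⁻¹ = π / (2 * a) := by
  rw [integral_Ioi_of_hasDerivAt_of_nonneg' (fun x _ => aux_hasDeriv a ha x)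
    (fun x _ => by positivity) (aux_tendsto a ha)]
  simp [arctan_zero]
  ring

-- (∏ k ∈ Icc (a+1) b, k) * a! = b!  for a ≤ b
lemma prod_Icc_mul_factorial (a : ℕ) : ∀ b : ℕ, a ≤ b →
    (∏ k ∈ Finset.Icc (a+1) b, k) * a.factorial = b.factorial := by
  intro b
  induction b with
  | zero => intro h; simp [Nat.le_zero.mp h]
  | succ b ih =>
    intro h
    rcases Nat.lt_or_ge a (b+1) with h' | h'
    · have hab : a ≤ b := Nat.lt_succ_iff.mp h'
      rw [Finset.prod_Icc_succ_top (by omega : a+1 ≤ b+1), mul_comm _ (b+1), mul_assoc, ih hab,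
        Nat.factorial_succ]
    · have : a = b + 1 := le_antisymm h h'
      subst this
      simp [Finset.Icc_eq_empty_of_lt (Nat.lt_succ_self (b+1))]

-- ∏ k ∈ Icc 1 (j-1), (j - k) = (j-1)!
lemma prod_Icc_sub (j : ℕ) (hj : 1 ≤ j) :
    ∏ k ∈ Finset.Icc 1 (j-1), (j - k) = (j-1).factorial := by
  rw [← Finset.prod_Ico_id_eq_factorial (j-1), Finset.Ico_add_one_right_eq_Icc]
  apply Finset.prod_nbij' (fun k => j - k) (fun k => j - k)
  all_goals intro a ha <;> simp only [Finset.mem_Icc] at * <;> omega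

-- ∏ k ∈ Icc (j+1) m, (k - j) = (m-j)!
lemma prod_Icc_sub' (j m : ℕ) :
    ∏ k ∈ Finset.Icc (j+1) m, (k - j) = (m-j).factorial := by
  rw [← Finset.prod_Ico_id_eq_factorial (m-j), Finset.Ico_add_one_right_eq_Icc]
  apply Finset.prod_nbij' (fun k => k - j) (fun k => k + j)
  all_goals intro a ha <;> simp only [Finset.mem_Icc] at * <;> omega

-- ∏ k ∈ Icc 1 m, (k + j) * j! = (m+j)!
lemma prod_Icc_add (j m : ℕ) :
    (∏ k ∈ Finset.Icc 1 m, (k + j)) * j.factorial = (m+j).factorial := by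
  rw [← prod_Icc_mul_factorial j (m+j) (by omega)]
  congr 1
  apply Finset.prod_nbij' (fun k => k + j) (fun k => k - j)
  all_goals intro a ha <;> simp only [Finset.mem_Icc] at * <;> omega

lemma erase_Icc_split (m j : ℕ) (hj : j ∈ Finset.Icc 1 m) :
    (Finset.Icc 1 m).erase j = Finset.Icc 1 (j-1) ∪ Finset.Icc (j+1) m := by
  simp only [Finset.mem_Icc] at hj
  ext k
  simp only [Finset.mem_erase, Finset.mem_Icc, Finset.mem_union]
  omega

lemma prod_erase_eval (m j : ℕ) (hj : j ∈ Finset.Icc 1 m) :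
    ∏ k ∈ (Finset.Icc 1 m).erase j, ((k:ℝ)^2 - (j:ℝ)^2)
      = (-1)^(j-1) * (((m-j).factorial : ℝ) * ((m+j).factorial : ℝ)) / (2 * (j:ℝ)^2) := by
  simp only [Finset.mem_Icc] at hj
  obtain ⟨hj1, hjm⟩ := hj
  have hsplit : ∀ k : ℕ, (k:ℝ)^2 - (j:ℝ)^2 = ((k:ℝ) - j) * ((k:ℝ) + j) := fun k => by ring
  rw [Finset.prod_congr rfl (fun k _ => hsplit k), Finset.prod_mul_distrib]
  have hdisj : Disjoint (Finset.Icc 1 (j-1)) (Finset.Icc (j+1) m) := by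
    rw [Finset.disjoint_left]; intro k hk hk'
    simp only [Finset.mem_Icc] at hk hk'; omega
  have hA : ∏ k ∈ Finset.Icc 1 (j-1), ((k:ℝ) - j) = (-1)^(j-1) * ((j-1).factorial : ℝ) := by
    have : ∀ k ∈ Finset.Icc 1 (j-1), ((k:ℝ) - j) = (-1) * (((j - k : ℕ) : ℝ)) := by
      intro k hk
      simp only [Finset.mem_Icc] at hk
      have : (((j - k : ℕ)) : ℝ) = (j:ℝ) - k := by
        push_cast [Nat.cast_sub (by omega : k ≤ j)]; ring
      rw [this]; ring
    rw [Finset.prod_congr rfl this, Finset.prod_mul_distrib, Finset.prod_const,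
      Nat.card_Icc, ← Nat.cast_prod, prod_Icc_sub j hj1]
    norm_num
  have hB : ∏ k ∈ Finset.Icc (j+1) m, ((k:ℝ) - j) = ((m-j).factorial : ℝ) := by
    have : ∀ k ∈ Finset.Icc (j+1) m, ((k:ℝ) - j) = (((k - j : ℕ)) : ℝ) := by
      intro k hk
      simp only [Finset.mem_Icc] at hk
      push_cast [Nat.cast_sub (by omega : j ≤ k)]; ring
    rw [Finset.prod_congr rfl this, ← Nat.cast_prod, prod_Icc_sub' j m]
  have hC : ∏ k ∈ (Finset.Icc 1 m).erase j, ((k:ℝ) + j)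
      = ((m+j).factorial : ℝ) / (((j).factorial : ℝ) * (2 * j)) := by
    have h1 : (∏ k ∈ (Finset.Icc 1 m).erase j, ((k:ℝ) + j)) * ((j:ℝ) + j)
        = ∏ k ∈ Finset.Icc 1 m, ((k:ℝ) + j) :=
      Finset.prod_erase_mul _ _ (Finset.mem_Icc.mpr ⟨hj1, hjm⟩)
    have h2 : (∏ k ∈ Finset.Icc 1 m, ((k:ℝ) + j)) * ((j).factorial : ℝ)
        = ((m+j).factorial : ℝ) := by
      rw [show (∏ k ∈ Finset.Icc 1 m, ((k:ℝ) + j)) = (((∏ k ∈ Finset.Icc 1 m, (k + j) : ℕ)) : ℝ)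
        by push_cast; rfl, ← Nat.cast_mul, prod_Icc_add j m]
    have hjne : (j:ℝ) ≠ 0 := by positivity
    have hfne : ((j).factorial : ℝ) ≠ 0 := by positivity
    have h2' : (∏ k ∈ Finset.Icc 1 m, ((k:ℝ) + j)) = ((m+j).factorial : ℝ) / ((j).factorial : ℝ) :=
      eq_div_iff hfne |>.mpr h2
    have hjj : (j:ℝ) + j ≠ 0 := by positivity
    have h3 : ∏ k ∈ (Finset.Icc 1 m).erase j, ((k:ℝ) + j)
        = (∏ k ∈ Finset.Icc 1 m, ((k:ℝ) + j)) / ((j:ℝ) + j) := (eq_div_iff hjj).mpr h1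
    rw [h3, h2']
    field_simp
    try ring
    try tauto
  have hAB : ∏ k ∈ (Finset.Icc 1 m).erase j, ((k:ℝ) - j)
      = (-1)^(j-1) * ((j-1).factorial : ℝ) * ((m-j).factorial : ℝ) := by
    rw [erase_Icc_split m j (Finset.mem_Icc.mpr ⟨hj1, hjm⟩), Finset.prod_union hdisj, hA, hB]
  rw [hAB, hC]
  have hfact : ((j).factorial : ℝ) = (j:ℝ) * ((j-1).factorial : ℝ) := by
    rw [← Nat.cast_mul]
    norm_cast
    exact (Nat.mul_factorial_pred (by omega)).symm
  rw [hfact]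
  have hjne : (j:ℝ) ≠ 0 := by positivity
  have hf1 : ((j-1).factorial : ℝ) ≠ 0 := by positivity
  field_simp

lemma partial_frac (m : ℕ) (hm : 1 ≤ m) (x : ℝ) :
    ∏ j ∈ Finset.Icc 1 m, (x ^ 2 + (j:ℝ) ^ 2)⁻¹ =
      ∑ j ∈ Finset.Icc 1 m, (x ^ 2 + (j:ℝ) ^ 2)⁻¹ *
        ∏ k ∈ (Finset.Icc 1 m).erase j, (((k:ℝ) ^ 2 - (j:ℝ) ^ 2))⁻¹ := by
  set v : ℕ → ℝ := fun j => -(j:ℝ)^2 with hv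
  have hinj : Set.InjOn v (Finset.Icc 1 m) := by
    intro a _ b _ hab
    simp only [hv, neg_inj] at hab
    have : (a:ℕ)^2 = b^2 := by exact_mod_cast hab
    exact Nat.pow_left_injective two_ne_zero this
  have hsum := Lagrange.sum_basis hinj ⟨1, by simp [hm]⟩
  have heval := congrArg (Polynomial.eval (x^2)) hsum
  rw [Polynomial.eval_finset_sum, Polynomial.eval_one] at heval
  have hbasis : ∀ j ∈ Finset.Icc 1 m, Polynomial.eval (x^2) (Lagrange.basis (Finset.Icc 1 m) v j)
      = ∏ k ∈ (Finset.Icc 1 m).erase j, ((x^2 + (k:ℝ)^2) * ((k:ℝ)^2 - (j:ℝ)^2)⁻¹) := by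
    intro j hj
    rw [Lagrange.basis, Polynomial.eval_prod]
    refine Finset.prod_congr rfl fun k hk => ?_
    rw [Lagrange.basisDivisor]
    simp [hv]
    ring
  rw [Finset.sum_congr rfl hbasis] at heval
  -- Now: ∑ j, ∏_{k≠j} (x²+k²)(k²-j²)⁻¹ = 1
  -- Multiply both sides by ∏ (x²+j²)⁻¹
  have hpos : ∀ j ∈ Finset.Icc 1 m, (0:ℝ) < x^2 + (j:ℝ)^2 := by
    intro j hj
    have : 1 ≤ j := (Finset.mem_Icc.mp hj).1
    have : (1:ℝ) ≤ (j:ℝ) := by exact_mod_cast this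
    nlinarith
  calc ∏ j ∈ Finset.Icc 1 m, (x ^ 2 + (j:ℝ) ^ 2)⁻¹
      = (∑ j ∈ Finset.Icc 1 m, ∏ k ∈ (Finset.Icc 1 m).erase j,
          ((x^2 + (k:ℝ)^2) * ((k:ℝ)^2 - (j:ℝ)^2)⁻¹)) * ∏ j ∈ Finset.Icc 1 m, (x ^ 2 + (j:ℝ) ^ 2)⁻¹ := by
        rw [heval, one_mul]
    _ = ∑ j ∈ Finset.Icc 1 m, (x ^ 2 + (j:ℝ) ^ 2)⁻¹ *
        ∏ k ∈ (Finset.Icc 1 m).erase j, (((k:ℝ) ^ 2 - (j:ℝ) ^ 2))⁻¹ := by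
        rw [Finset.sum_mul]
        refine Finset.sum_congr rfl fun j hj => ?_
        have h1 : ∏ l ∈ Finset.Icc 1 m, (x ^ 2 + (l:ℝ) ^ 2)⁻¹
            = (∏ k ∈ (Finset.Icc 1 m).erase j, (x ^ 2 + (k:ℝ) ^ 2)⁻¹) * (x ^ 2 + (j:ℝ) ^ 2)⁻¹ :=
          (Finset.prod_erase_mul _ _ hj).symm
        have h2 : (∏ k ∈ (Finset.Icc 1 m).erase j, (x ^ 2 + (k:ℝ) ^ 2)) *
            (∏ k ∈ (Finset.Icc 1 m).erase j, (x ^ 2 + (k:ℝ) ^ 2)⁻¹) = 1 := by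
          rw [← Finset.prod_mul_distrib]
          exact Finset.prod_eq_one fun k hk =>
            mul_inv_cancel₀ (hpos k (Finset.mem_of_mem_erase hk)).ne'
        rw [Finset.prod_mul_distrib, h1, mul_mul_mul_comm, h2, one_mul, mul_comm]

lemma telescope_sum (m : ℕ) (hm : 1 ≤ m) :
    ∑ j ∈ Finset.Icc 1 m, (-1:ℝ)^(j-1) * (2*(j:ℝ)) / (((m-j).factorial:ℝ) * ((m+j).factorial:ℝ))
      = 1 / ((2*(m:ℝ)-1) * ((m-1).factorial:ℝ) * (m.factorial:ℝ)) := by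
  set t : ℕ → ℝ := fun j => if 1 ≤ j ∧ j ≤ m then
    (-1:ℝ)^(j-1) * (2*(j:ℝ)-1) / ((2*(m:ℝ)-1) * ((m-j).factorial:ℝ) * ((m+j-1).factorial:ℝ))
    else 0 with ht
  have hmR : (1:ℝ) ≤ (m:ℝ) := by exact_mod_cast hm
  have h2m : (2*(m:ℝ)-1) ≠ 0 := by linarith
  have key : ∀ j ∈ Finset.Icc 1 m,
      (-1:ℝ)^(j-1) * (2*(j:ℝ)) / (((m-j).factorial:ℝ) * ((m+j).factorial:ℝ)) = t j - t (j+1) := by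
    intro j hj
    simp only [Finset.mem_Icc] at hj
    obtain ⟨hj1, hjm⟩ := hj
    obtain ⟨i, rfl⟩ : ∃ i, j = i + 1 := ⟨j - 1, by omega⟩
    rcases Nat.lt_or_ge (i+1) m with hlt | hge
    · -- j < m
      obtain ⟨d, hd⟩ : ∃ d, m = (i+1) + (d + 1) := ⟨m - i - 2, by omega⟩
      rw [ht]
      simp only [hd, show 1 ≤ i + 1 ∧ i + 1 ≤ i + 1 + (d + 1) by omega,
        show 1 ≤ i + 1 + 1 ∧ i + 1 + 1 ≤ i + 1 + (d + 1) by omega, and_self, if_true,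
        show i + 1 - 1 = i from rfl, show i + 1 + 1 - 1 = i + 1 from rfl]
      have e1 : i + 1 + (d + 1) - (i + 1) = d + 1 := by omega
      have e2 : i + 1 + (d + 1) + (i + 1) - 1 = 2*i + d + 2 := by omega
      have e3 : i + 1 + (d + 1) - (i + 1 + 1) = d := by omega
      have e4 : i + 1 + (d + 1) + (i + 1 + 1) - 1 = 2*i + d + 3 := by omega
      have e5 : i + 1 + (d + 1) + (i + 1) = 2*i + d + 3 := by omega
      rw [e1, e2, e3, e4, e5]
      have f1 : ((d+1).factorial : ℝ) = (d+1) * (d.factorial : ℝ) := by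
        norm_cast
      have f2 : ((2*i+d+3).factorial : ℝ) = (2*i+d+3) * ((2*i+d+2).factorial : ℝ) := by
        norm_cast
      have h2m' : (2*((i:ℝ)+1+((d:ℝ)+1))-1) ≠ 0 := by
        have hi : (0:ℝ) ≤ (i:ℝ) := Nat.cast_nonneg i
        have hd' : (0:ℝ) ≤ (d:ℝ) := Nat.cast_nonneg d
        nlinarith
      have hdf : (d.factorial : ℝ) ≠ 0 := by positivity
      have hgf : ((2*i+d+2).factorial : ℝ) ≠ 0 := by positivity
      rw [f1, f2, pow_succ]
      push_cast
      field_simp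
      ring
    · -- j = m
      have hjm' : i + 1 = m := by omega
      subst hjm'
      rw [ht]
      simp only [show 1 ≤ i + 1 ∧ i + 1 ≤ i + 1 by omega, and_self, if_true,
        show ¬(1 ≤ i + 1 + 1 ∧ i + 1 + 1 ≤ i + 1) by omega, if_false,
        show i + 1 - (i+1) = 0 from by omega, show i + 1 + (i + 1) - 1 = 2*i+1 from by omega,
        show i + 1 + (i + 1) = 2*i + 2 from by omega, show i + 1 - 1 = i from rfl]
      have f2 : ((2*i+2).factorial : ℝ) = (2*(i:ℝ)+2) * ((2*i+1).factorial : ℝ) := by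
        norm_cast
      have hgf : ((2*i+1).factorial : ℝ) ≠ 0 := by positivity
      have h2m' : (2*((i:ℝ)+1)-1) ≠ 0 := by
        have hi : (0:ℝ) ≤ (i:ℝ) := Nat.cast_nonneg i
        nlinarith
      rw [f2]
      push_cast
      push_cast at h2m'
      field_simp
      ring
  rw [Finset.sum_congr rfl key]
  have := Finset.sum_range_sub' (f := fun i => t (1 + i)) m
  have hconv : ∑ j ∈ Finset.Icc 1 m, (t j - t (j+1))
      = ∑ i ∈ Finset.range m, (t (1+i) - t (1+i+1)) := by
    rw [← Finset.Ico_add_one_right_eq_Icc, Finset.sum_Ico_eq_sum_range]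
    simp
  rw [hconv]
  rw [show (∑ i ∈ Finset.range m, (t (1+i) - t (1+i+1)))
    = ∑ i ∈ Finset.range m, ((fun i => t (1+i)) i - (fun i => t (1+i)) (i+1)) from rfl, this]
  have ht1 : t 1 = 1 / ((2*(m:ℝ)-1) * ((m-1).factorial:ℝ) * (m.factorial:ℝ)) := by
    rw [ht]
    simp only [show 1 ≤ 1 ∧ 1 ≤ m by omega, if_true,
      show (1:ℕ) - 1 = 0 from rfl, show m + 1 - 1 = m from by omega]
    norm_num
  have htm : t (1 + m) = 0 := by
    rw [ht]; simp only [show ¬(1 ≤ 1 + m ∧ 1 + m ≤ m) by omega, if_false]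
  rw [ht1, htm, sub_zero]

set_option maxHeartbeats 2000000 in
theorem integral_prod_consecutive_squares (n : ℕ) :
    (2 / π) * ∫ x in Set.Ioi (0:ℝ), ∏ j ∈ Finset.Icc 1 (n + 1), (x ^ 2 + (j:ℝ) ^ 2)⁻¹ =
      1 / ((2 * n + 1) * n.factorial * (n + 1).factorial : ℝ) := by
  set m := n + 1 with hm
  have hm1 : 1 ≤ m := by omega
  have hjpos : ∀ j ∈ Finset.Icc 1 m, (0:ℝ) < (j:ℝ) := by
    intro j hj
    have := (Finset.mem_Icc.mp hj).1
    exact_mod_cast Nat.lt_of_lt_of_le Nat.zero_lt_one this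
  simp only [partial_frac m hm1]
  have hint : ∀ j ∈ Finset.Icc 1 m, IntegrableOn (fun (x : ℝ) => (x ^ 2 + (j:ℝ) ^ 2)⁻¹ *
      ∏ k ∈ (Finset.Icc 1 m).erase j, (((k:ℝ) ^ 2 - (j:ℝ) ^ 2))⁻¹) (Set.Ioi 0) :=
    fun j hj => (aux_integrable (j:ℝ) (hjpos j hj)).mul_const _
  have hsum := MeasureTheory.integral_finset_sum (μ := volume.restrict (Set.Ioi 0))
    (Finset.Icc 1 m)
    (f := fun (j : ℕ) (x : ℝ) => (x ^ 2 + (j:ℝ) ^ 2)⁻¹ *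
      ∏ k ∈ (Finset.Icc 1 m).erase j, (((k:ℝ) ^ 2 - (j:ℝ) ^ 2))⁻¹)
    hint
  rw [hsum]
  have hterm : ∀ j ∈ Finset.Icc 1 m,
      (∫ x in Ioi (0:ℝ), (x ^ 2 + (j:ℝ) ^ 2)⁻¹ *
        ∏ k ∈ (Finset.Icc 1 m).erase j, (((k:ℝ) ^ 2 - (j:ℝ) ^ 2))⁻¹)
      = (π / (2 * (j:ℝ))) * ∏ k ∈ (Finset.Icc 1 m).erase j, (((k:ℝ) ^ 2 - (j:ℝ) ^ 2))⁻¹ := by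
    intro j hj
    rw [MeasureTheory.integral_mul_const, aux_integral (j:ℝ) (hjpos j hj)]
  rw [Finset.sum_congr rfl hterm, Finset.mul_sum]
  have hterm2 : ∀ j ∈ Finset.Icc 1 m,
      2 / π * (π / (2 * (j:ℝ)) * ∏ k ∈ (Finset.Icc 1 m).erase j, (((k:ℝ) ^ 2 - (j:ℝ) ^ 2))⁻¹)
      = (-1:ℝ)^(j-1) * (2*(j:ℝ)) / (((m-j).factorial:ℝ) * ((m+j).factorial:ℝ)) := by
    intro j hj
    rw [Finset.prod_inv_distrib, prod_erase_eval m j hj]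
    have hjp := hjpos j hj
    have hfa : ((m-j).factorial:ℝ) ≠ 0 := by positivity
    have hfb : ((m+j).factorial:ℝ) ≠ 0 := by positivity
    have hpi : (π:ℝ) ≠ 0 := Real.pi_ne_zero
    rcases neg_one_pow_eq_or ℝ (j-1) with h | h <;> rw [h] <;> field_simp <;> ring
  rw [Finset.sum_congr rfl hterm2, telescope_sum m hm1]
  have hmn : m - 1 = n := by omega
  rw [hmn, hm]
  push_cast
  ring_nf
end

section
/- For every nonnegative integer n, (2/π) ∫₀^∞ ∏_{j=1}^{n+1} 1/(x² + (2j−1)²) dx = 1/(2^(2n) · (2n+1) · (n!)²). -/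
open MeasureTheory Real

lemma int_inv_sq_add_sq {a : ℝ} (ha : 0 < a) :
    ∫ x in Set.Ioi (0:ℝ), (x ^ 2 + a ^ 2)⁻¹ = π / (2 * a) := by
  have h := integral_comp_mul_left_Ioi (fun y => (1 + y ^ 2)⁻¹) 0 (inv_pos.mpr ha)
  simp only [mul_zero, integral_Ioi_inv_one_add_sq, arctan_zero, sub_zero, inv_inv,
    smul_eq_mul] at h
  have key : ∫ x in Set.Ioi (0:ℝ), (x ^ 2 + a ^ 2)⁻¹
      = ∫ x in Set.Ioi (0:ℝ), a⁻¹ * a⁻¹ * (1 + (a⁻¹ * x) ^ 2)⁻¹ := by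
    refine setIntegral_congr_fun measurableSet_Ioi (fun x hx => ?_)
    have hx2 : (0:ℝ) < x ^ 2 + a ^ 2 := by positivity
    field_simp
    ring
  rw [key, integral_const_mul, h]
  field_simp

noncomputable def FF (m s : ℕ) : ℝ :=
  ∫ x in Set.Ioi (0:ℝ), ∏ i ∈ Finset.range m, (x ^ 2 + (2*(i:ℝ) + 1 + 2*(s:ℝ)) ^ 2)⁻¹

lemma FF_intg (m s : ℕ) (hm : 1 ≤ m) :
    IntegrableOn (fun x : ℝ =>
      ∏ i ∈ Finset.range m, (x ^ 2 + (2*(i:ℝ) + 1 + 2*(s:ℝ)) ^ 2)⁻¹) (Set.Ioi 0) := by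
  have hpos : ∀ (i : ℕ) (x : ℝ), (0:ℝ) < x ^ 2 + (2*(i:ℝ) + 1 + 2*(s:ℝ)) ^ 2 := by
    intro i x
    have : (0:ℝ) < 2*(i:ℝ) + 1 + 2*(s:ℝ) := by positivity
    positivity
  have hcont : Continuous (fun x : ℝ =>
      ∏ i ∈ Finset.range m, (x ^ 2 + (2*(i:ℝ) + 1 + 2*(s:ℝ)) ^ 2)⁻¹) := by
    apply continuous_finset_prod
    intro i _
    exact ((continuous_pow 2).add continuous_const).inv₀ (fun x => (hpos i x).ne')
  refine Integrable.mono' (g := fun x : ℝ => (1 + x ^ 2)⁻¹)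
    integrable_inv_one_add_sq.integrableOn hcont.aestronglyMeasurable.restrict
    (Filter.Eventually.of_forall (fun x => ?_))
  rw [Real.norm_eq_abs, abs_of_nonneg (Finset.prod_nonneg fun i _ => inv_nonneg.mpr (hpos i x).le)]
  calc ∏ i ∈ Finset.range m, (x ^ 2 + (2*(i:ℝ) + 1 + 2*(s:ℝ)) ^ 2)⁻¹
      ≤ ∏ i ∈ Finset.range m, (if i = 0 then (1 + x ^ 2)⁻¹ else 1) := by
        apply Finset.prod_le_prod
        · intro i _; exact inv_nonneg.mpr (hpos i x).le
        · intro i _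
          by_cases hi : i = 0
          · subst hi
            simp only [if_true]
            apply inv_anti₀ (by positivity)
            have hs : (0:ℝ) ≤ (s:ℝ) := Nat.cast_nonneg s
            push_cast
            nlinarith [sq_nonneg ((s:ℝ))]
          · simp only [hi, if_false]
            rw [inv_le_one_iff₀]
            right
            have h1 : (1:ℝ) ≤ (2*(i:ℝ) + 1 + 2*(s:ℝ)) ^ 2 := by
              nlinarith [sq_nonneg ((i:ℝ)), Nat.cast_nonneg (α := ℝ) i, Nat.cast_nonneg (α := ℝ) s]
            nlinarith
    _ = (1 + x ^ 2)⁻¹ := by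
        rw [Finset.prod_ite_eq' (Finset.range m) 0 (fun _ => (1 + x ^ 2)⁻¹),
          if_pos (Finset.mem_range.mpr hm)]

lemma FF_succ (m s : ℕ) (hm : 1 ≤ m) :
    FF (m+1) s = (FF m s - FF m (s+1)) / (4*(m:ℝ)*((m:ℝ)+2*(s:ℝ)+1)) := by
  have hm' : (1:ℝ) ≤ (m:ℝ) := by exact_mod_cast hm
  have hs' : (0:ℝ) ≤ (s:ℝ) := Nat.cast_nonneg s
  have hc : (0:ℝ) < 4*(m:ℝ)*((m:ℝ)+2*(s:ℝ)+1) := by nlinarith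
  have key : ∀ x : ℝ,
      ∏ i ∈ Finset.range (m+1), (x ^ 2 + (2*(i:ℝ) + 1 + 2*(s:ℝ)) ^ 2)⁻¹
      = ((∏ i ∈ Finset.range m, (x ^ 2 + (2*(i:ℝ) + 1 + 2*(s:ℝ)) ^ 2)⁻¹)
        - ∏ i ∈ Finset.range m, (x ^ 2 + (2*(i:ℝ) + 1 + 2*((s:ℝ)+1)) ^ 2)⁻¹)
        * (4*(m:ℝ)*((m:ℝ)+2*(s:ℝ)+1))⁻¹ := by
    intro x
    have hD1 : (0:ℝ) < x ^ 2 + (2*(m:ℝ) + 1 + 2*(s:ℝ)) ^ 2 := by nlinarith [sq_nonneg x]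
    have hD0 : (0:ℝ) < x ^ 2 + (2*(0:ℝ) + 1 + 2*(s:ℝ)) ^ 2 := by nlinarith [sq_nonneg x]
    have h1 := Finset.prod_range_succ
      (fun i : ℕ => (x ^ 2 + (2*(i:ℝ) + 1 + 2*(s:ℝ)) ^ 2)⁻¹) m
    have h2 := Finset.prod_range_succ'
      (fun i : ℕ => (x ^ 2 + (2*(i:ℝ) + 1 + 2*(s:ℝ)) ^ 2)⁻¹) m
    have h3 : ∏ i ∈ Finset.range m, (x ^ 2 + (2*(i:ℝ) + 1 + 2*((s:ℝ)+1)) ^ 2)⁻¹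
        = ∏ i ∈ Finset.range m, (x ^ 2 + (2*((i:ℝ)+1) + 1 + 2*(s:ℝ)) ^ 2)⁻¹ :=
      Finset.prod_congr rfl (fun i _ => by ring_nf)
    push_cast at h1 h2
    -- from h1: ∏_{range m} at s = ∏_{range (m+1)} * D1
    have e1 : ∏ i ∈ Finset.range m, (x ^ 2 + (2*(i:ℝ) + 1 + 2*(s:ℝ)) ^ 2)⁻¹
        = (∏ i ∈ Finset.range (m+1), (x ^ 2 + (2*(i:ℝ) + 1 + 2*(s:ℝ)) ^ 2)⁻¹)
          * (x ^ 2 + (2*(m:ℝ) + 1 + 2*(s:ℝ)) ^ 2) := by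
      rw [h1]; field_simp
    have e2 : ∏ i ∈ Finset.range m, (x ^ 2 + (2*(i:ℝ) + 1 + 2*((s:ℝ)+1)) ^ 2)⁻¹
        = (∏ i ∈ Finset.range (m+1), (x ^ 2 + (2*(i:ℝ) + 1 + 2*(s:ℝ)) ^ 2)⁻¹)
          * (x ^ 2 + (2*(0:ℝ) + 1 + 2*(s:ℝ)) ^ 2) := by
      rw [h3, h2]; push_cast; field_simp
    rw [e1, e2]
    field_simp
    ring
  unfold FF
  push_cast
  simp_rw [key]
  rw [integral_mul_const, integral_sub (FF_intg m s hm) ?_, div_eq_mul_inv]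
  have h := FF_intg m (s+1) hm
  push_cast at h
  exact h

lemma FF_formula (m : ℕ) : ∀ s : ℕ, FF (m+1) s
    = π/2 * (∏ k ∈ Finset.range m, (2*(k:ℝ)+1))
      / ((4:ℝ)^m * (Nat.factorial m : ℝ)
        * (∏ j ∈ Finset.range (m+1), (2*(s:ℝ)+2*(j:ℝ)+1))
        * (∏ j ∈ Finset.range m, ((s:ℝ)+(j:ℝ)+1))) := by
  induction m with
  | zero =>
    intro s
    have hs : (0:ℝ) < 2*(0:ℝ)+1+2*(s:ℝ) := by positivity
    unfold FF
    simp only [zero_add, Finset.prod_range_one, Finset.prod_range_zero, Nat.cast_zero,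
      Nat.factorial_zero, Nat.cast_one, pow_zero]
    rw [int_inv_sq_add_sq hs]
    have h1 : (2:ℝ)*(0:ℝ)+1+2*(s:ℝ) ≠ 0 := by positivity
    have h2 : (2:ℝ)*(s:ℝ)+2*(0:ℝ)+1 ≠ 0 := by positivity
    push_cast
    field_simp
    ring
  | succ m IH =>
    intro s
    have hs0 : (0:ℝ) ≤ (s:ℝ) := Nat.cast_nonneg s
    have hm0 : (0:ℝ) ≤ (m:ℝ) := Nat.cast_nonneg m
    rw [FF_succ (m+1) s (by omega), IH s, IH (s+1)]
    push_cast [Nat.factorial_succ]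
    -- product relations
    have h3 : ∏ j ∈ Finset.range (m+1), (2*(s:ℝ)+2*((j:ℝ)+1)+1)
        = ∏ j ∈ Finset.range (m+1), (2*((s:ℝ)+1)+2*(j:ℝ)+1) :=
      Finset.prod_congr rfl (fun j _ => by ring)
    have h4 : ∏ j ∈ Finset.range m, ((s:ℝ)+((j:ℝ)+1)+1)
        = ∏ j ∈ Finset.range m, (((s:ℝ)+1)+(j:ℝ)+1) :=
      Finset.prod_congr rfl (fun j _ => by ring)
    have hp0 := Finset.prod_range_succ (fun k : ℕ => 2*(k:ℝ)+1) m
    push_cast at hp0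
    have hp1 := Finset.prod_range_succ (fun j : ℕ => (2*(s:ℝ)+2*(j:ℝ)+1)) (m+1)
    have hp2 := Finset.prod_range_succ' (fun j : ℕ => (2*(s:ℝ)+2*(j:ℝ)+1)) (m+1)
    have hr1 := Finset.prod_range_succ (fun j : ℕ => ((s:ℝ)+(j:ℝ)+1)) m
    have hr2 := Finset.prod_range_succ' (fun j : ℕ => ((s:ℝ)+(j:ℝ)+1)) m
    push_cast at hp1 hp2 hr1 hr2
    rw [h3] at hp2
    rw [h4] at hr2
    -- positivity
    have hPpos : (0:ℝ) < ∏ j ∈ Finset.range (m+1), (2*(s:ℝ)+2*(j:ℝ)+1) :=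
      Finset.prod_pos (fun j _ => by positivity)
    have hP1pos : (0:ℝ) < ∏ j ∈ Finset.range (m+1), (2*((s:ℝ)+1)+2*(j:ℝ)+1) :=
      Finset.prod_pos (fun j _ => by positivity)
    have hRpos : (0:ℝ) < ∏ j ∈ Finset.range m, ((s:ℝ)+(j:ℝ)+1) :=
      Finset.prod_pos (fun j _ => by positivity)
    have hR1pos : (0:ℝ) < ∏ j ∈ Finset.range m, (((s:ℝ)+1)+(j:ℝ)+1) :=
      Finset.prod_pos (fun j _ => by positivity)
    have eP : ∏ j ∈ Finset.range (m+1), (2*((s:ℝ)+1)+2*(j:ℝ)+1)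
        = (∏ j ∈ Finset.range (m+1), (2*(s:ℝ)+2*(j:ℝ)+1)) * (2*(s:ℝ)+2*((m:ℝ)+1)+1)
          / (2*(s:ℝ)+1) := by
      rw [eq_div_iff (by positivity)]
      linear_combination hp1 - hp2
    have eR : ∏ j ∈ Finset.range m, (((s:ℝ)+1)+(j:ℝ)+1)
        = (∏ j ∈ Finset.range m, ((s:ℝ)+(j:ℝ)+1)) * ((s:ℝ)+(m:ℝ)+1) / ((s:ℝ)+1) := by
      rw [eq_div_iff (by positivity)]
      linear_combination hr1 - hr2
    rw [hp0, hp1, hr1, eP, eR]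
    have hfac : (0:ℝ) < (Nat.factorial m : ℝ) := by exact_mod_cast m.factorial_pos
    field_simp
    ring

theorem integral_prod_odd_squares (n : ℕ) :
    (2 / π) * ∫ x in Set.Ioi (0:ℝ),
        ∏ j ∈ Finset.Icc 1 (n + 1), (x ^ 2 + (2 * (j:ℝ) - 1) ^ 2)⁻¹ =
      1 / (2 ^ (2 * n) * (2 * n + 1) * (n.factorial : ℝ) ^ 2) := by
  have hconv : ∀ x : ℝ, ∏ j ∈ Finset.Icc 1 (n + 1), (x ^ 2 + (2 * (j:ℝ) - 1) ^ 2)⁻¹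
      = ∏ i ∈ Finset.range (n+1), (x ^ 2 + (2*(i:ℝ) + 1 + 2*(((0:ℕ)):ℝ)) ^ 2)⁻¹ := by
    intro x
    rw [← Finset.Ico_add_one_right_eq_Icc, Finset.prod_Ico_eq_prod_range]
    refine Finset.prod_congr (by norm_num) (fun i _ => ?_)
    push_cast
    ring_nf
  have hFF : (∫ x in Set.Ioi (0:ℝ),
      ∏ j ∈ Finset.Icc 1 (n + 1), (x ^ 2 + (2 * (j:ℝ) - 1) ^ 2)⁻¹) = FF (n+1) 0 := by
    unfold FF
    exact setIntegral_congr_fun measurableSet_Ioi (fun x _ => hconv x)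
  rw [hFF, FF_formula n 0]
  have hp := Finset.prod_range_succ (fun j : ℕ => (2*((0:ℕ):ℝ)+2*(j:ℝ)+1)) n
  push_cast at hp
  have hpc : ∏ j ∈ Finset.range (n+1), (2*((0:ℕ):ℝ)+2*(j:ℝ)+1)
      = (∏ k ∈ Finset.range n, (2*(k:ℝ)+1)) * (2*(n:ℝ)+1) := by
    push_cast
    rw [hp]
    norm_num
  have hrc : ∏ j ∈ Finset.range n, (((0:ℕ):ℝ)+(j:ℝ)+1) = (n.factorial : ℝ) := by
    rw [← Finset.prod_range_add_one_eq_factorial n]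
    push_cast
    exact Finset.prod_congr rfl (fun j _ => by ring)
  rw [hpc, hrc]
  have hA : (0:ℝ) < ∏ k ∈ Finset.range n, (2*(k:ℝ)+1) :=
    Finset.prod_pos (fun k _ => by positivity)
  have hfac : (0:ℝ) < (n.factorial : ℝ) := by exact_mod_cast n.factorial_pos
  have h4 : (2:ℝ) ^ (2*n) = 4 ^ n := by
    rw [pow_mul]; norm_num
  rw [h4]
  have hn1 : (0:ℝ) < 2*(n:ℝ)+1 := by positivity
  field_simp
end

section
/- For every positive integer n and real q with 0 < q < 1, (2/π) ∫₀^∞ ∏_{k=1}^n 1/(x² + q^(2k)) dx = q^(−n²) ∏_{j=1}^{n−1} (1 − q^(2j−1))/(1 − q^(2j)). -/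
open MeasureTheory Real

theorem base_int_aux (a : ℝ) (ha : 0 < a) :
    ∫ x in Set.Ioi (0:ℝ), (x^2 + a^2)⁻¹ = π / (2*a) := by
  have h1 : ∀ x : ℝ, (x^2 + a^2)⁻¹ = a⁻¹^2 * (1 + (a⁻¹*x)^2)⁻¹ := by
    intro x; field_simp; ring
  simp_rw [h1]
  rw [MeasureTheory.integral_const_mul,
    integral_comp_mul_left_Ioi (fun y => (1+y^2)⁻¹) 0 (inv_pos.mpr ha),
    mul_zero, integral_Ioi_inv_one_add_sq]
  simp only [arctan_zero, smul_eq_mul, sub_zero, inv_inv]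
  field_simp

theorem base_integrable_aux (a : ℝ) (ha : 0 < a) :
    IntegrableOn (fun x : ℝ => (x^2 + a^2)⁻¹) (Set.Ioi 0) := by
  have h1 : ∀ x : ℝ, (x^2 + a^2)⁻¹ = a⁻¹^2 * (1 + (a⁻¹*x)^2)⁻¹ := by
    intro x; field_simp; ring
  simp_rw [h1]
  exact (((integrable_inv_one_add_sq.comp_mul_left' (inv_ne_zero ha.ne')).const_mul _).integrableOn)

theorem prod_integrable_aux (q : ℝ) (h0 : 0 < q) (s : Finset ℕ) (hs : s.Nonempty) :
    IntegrableOn (fun x : ℝ => ∏ k ∈ s, (x^2 + q^(2*k))⁻¹) (Set.Ioi 0) := by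
  obtain ⟨k₀, hk₀⟩ := hs
  have hpos : ∀ k, (0:ℝ) < q ^ (2*k) := fun k => pow_pos h0 _
  have hposx : ∀ (x : ℝ) k, (0:ℝ) < x^2 + q^(2*k) := fun x k => by positivity
  have hcont : Continuous (fun x : ℝ => ∏ k ∈ s, (x^2 + q^(2*k))⁻¹) := by
    refine continuous_finset_prod _ (fun k _ => ?_)
    exact ((continuous_pow 2).add continuous_const).inv₀ (fun x => (hposx x k).ne')
  have hq : q^(2*k₀) = (q^k₀)^2 := by rw [← pow_mul, mul_comm]
  refine Integrable.mono'
    (((base_integrable_aux (q^k₀) (pow_pos h0 _)).const_mul (∏ k ∈ s.erase k₀, (q^(2*k))⁻¹)))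
    hcont.aestronglyMeasurable (Filter.Eventually.of_forall (fun x => ?_))
  rw [Real.norm_eq_abs,
    abs_of_nonneg (Finset.prod_nonneg fun k _ => (inv_nonneg.mpr (hposx x k).le))]
  rw [← Finset.prod_erase_mul s _ hk₀, ← hq]
  have h2 : ∏ k ∈ s.erase k₀, (x^2 + q^(2*k))⁻¹ ≤ ∏ k ∈ s.erase k₀, (q^(2*k))⁻¹ := by
    refine Finset.prod_le_prod (fun k _ => (inv_nonneg.mpr (hposx x k).le)) (fun k _ => ?_)
    exact inv_anti₀ (hpos k) (le_add_of_nonneg_left (sq_nonneg x))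
  exact mul_le_mul_of_nonneg_right h2 (inv_nonneg.mpr (hposx x k₀).le)

theorem scale_int_aux (q : ℝ) (h0 : 0 < q) (n : ℕ) :
    ∫ x in Set.Ioi (0:ℝ), ∏ k ∈ Finset.Icc 2 (n+1), (x^2 + q^(2*k))⁻¹
      = q * (q^(2*n))⁻¹ * ∫ x in Set.Ioi (0:ℝ), ∏ k ∈ Finset.Icc 1 n, (x^2 + q^(2*k))⁻¹ := by
  have hpt : ∀ x : ℝ, ∏ k ∈ Finset.Icc 2 (n+1), (x^2 + q^(2*k))⁻¹
      = (q^(2*n))⁻¹ * ∏ k ∈ Finset.Icc 1 n, ((q⁻¹*x)^2 + q^(2*k))⁻¹ := by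
    intro x
    have hfac : ∀ k : ℕ, ((q⁻¹*x)^2 + q^(2*k))⁻¹ = q^2 * (x^2 + q^(2*(k+1)))⁻¹ := by
      intro k
      have : (q⁻¹*x)^2 + q^(2*k) = q⁻¹^2 * (x^2 + q^(2*(k+1))) := by
        field_simp
        ring
      rw [this, mul_inv, inv_pow, inv_inv]
    have hmap : Finset.Icc 2 (n+1) = (Finset.Icc 1 n).map (addRightEmbedding 1) := by
      rw [Finset.map_add_right_Icc]
    rw [hmap, Finset.prod_map]
    simp only [addRightEmbedding_apply]
    simp_rw [hfac]
    rw [Finset.prod_mul_distrib, Finset.prod_const, Nat.card_Icc]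
    rw [show n+1-1 = n from rfl, ← pow_mul, ← mul_assoc,
      inv_mul_cancel₀ (by positivity : (q:ℝ)^(2*n) ≠ 0), one_mul]
  simp_rw [hpt]
  rw [MeasureTheory.integral_const_mul,
    integral_comp_mul_left_Ioi (fun y => ∏ k ∈ Finset.Icc 1 n, (y^2 + q^(2*k))⁻¹) 0
      (inv_pos.mpr h0), mul_zero, inv_inv, smul_eq_mul]
  ring

theorem recursion_int_aux (q : ℝ) (h0 : 0 < q) (h1 : q < 1) (n : ℕ) (hn : 1 ≤ n) :
    ∫ x in Set.Ioi (0:ℝ), ∏ k ∈ Finset.Icc 1 (n+1), (x^2 + q^(2*k))⁻¹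
      = (q^2 - q^(2*(n+1)))⁻¹ * (q * (q^(2*n))⁻¹ - 1)
        * ∫ x in Set.Ioi (0:ℝ), ∏ k ∈ Finset.Icc 1 n, (x^2 + q^(2*k))⁻¹ := by
  have hc : q^2 - q^(2*(n+1)) ≠ 0 := by
    have : q^(2*(n+1)) < q^2 := pow_lt_pow_right_of_lt_one₀ h0 h1 (by omega)
    linarith
  have hs1 : Finset.Icc 1 (n+1) = insert 1 (Finset.Icc 2 (n+1)) := by
    ext k; simp only [Finset.mem_Icc, Finset.mem_insert]; omega
  have hs2 : Finset.Icc 2 (n+1) = insert (n+1) (Finset.Icc 2 n) := by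
    ext k; simp only [Finset.mem_Icc, Finset.mem_insert]; omega
  have hs3 : Finset.Icc 1 n = insert 1 (Finset.Icc 2 n) := by
    ext k; simp only [Finset.mem_Icc, Finset.mem_insert]; omega
  have hm1 : (1:ℕ) ∉ Finset.Icc 2 (n+1) := by simp
  have hm2 : n+1 ∉ Finset.Icc 2 n := by simp
  have hm3 : (1:ℕ) ∉ Finset.Icc 2 n := by simp
  have hpt : ∀ x : ℝ, ∏ k ∈ Finset.Icc 1 (n+1), (x^2 + q^(2*k))⁻¹
      = (q^2 - q^(2*(n+1)))⁻¹ * (∏ k ∈ Finset.Icc 2 (n+1), (x^2 + q^(2*k))⁻¹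
        - ∏ k ∈ Finset.Icc 1 n, (x^2 + q^(2*k))⁻¹) := by
    intro x
    rw [hs1, Finset.prod_insert hm1, hs2, Finset.prod_insert hm2, hs3, Finset.prod_insert hm3]
    have hA : x^2 + q^(2*1) ≠ 0 := by positivity
    have hB : x^2 + q^(2*(n+1)) ≠ 0 := by positivity
    field_simp
    ring
  simp_rw [hpt]
  rw [MeasureTheory.integral_const_mul,
    integral_sub (prod_integrable_aux q h0 _ (Finset.nonempty_Icc.mpr (by omega)))
      (prod_integrable_aux q h0 _ (Finset.nonempty_Icc.mpr (by omega))),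
    scale_int_aux q h0 n]
  ring

theorem integral_prod_q_powers (n : ℕ) (hn : 0 < n) (q : ℝ) (h0 : 0 < q) (h1 : q < 1) :
    (2 / π) * ∫ x in Set.Ioi (0:ℝ), ∏ k ∈ Finset.Icc 1 n, (x ^ 2 + q ^ (2 * k))⁻¹ =
      q ^ (-(n ^ 2 : ℤ)) * ∏ j ∈ Finset.Icc 1 (n - 1), (1 - q ^ (2 * j - 1)) / (1 - q ^ (2 * j)) := by
  induction n with
  | zero => omega
  | succ m ih =>
    rcases Nat.eq_zero_or_pos m with hm | hm
    · subst hm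
      have hpt : ∀ x : ℝ, ∏ k ∈ Finset.Icc 1 1, (x^2 + q^(2*k))⁻¹ = (x^2 + q^2)⁻¹ := by
        intro x; rw [Finset.Icc_self, Finset.prod_singleton, mul_one, sq]
      simp_rw [hpt]
      rw [base_int_aux q h0]
      rw [show (0:ℕ)+1-1 = 0 from rfl, show Finset.Icc 1 0 = ∅ from rfl, Finset.prod_empty,
        mul_one]
      norm_num
      field_simp [pi_ne_zero]
    · obtain ⟨k, rfl⟩ := Nat.exists_eq_add_of_le hm
      rw [recursion_int_aux q h0 h1 (1+k) hm]
      have hq2m : (1:ℝ) - q^(2*(1+k)) ≠ 0 := by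
        have : q^(2*(1+k)) < 1 := pow_lt_one₀ h0.le h1 (by omega)
        linarith
      have hc : q^2 - q^(2*(1+k+1)) ≠ 0 := by
        have : q^(2*(1+k+1)) < q^2 := pow_lt_pow_right_of_lt_one₀ h0 h1 (by omega)
        linarith
      have step : (2/π) * ((q^2 - q^(2*(1+k+1)))⁻¹ * (q * (q^(2*(1+k)))⁻¹ - 1)
            * ∫ x in Set.Ioi (0:ℝ), ∏ j ∈ Finset.Icc 1 (1+k), (x^2 + q^(2*j))⁻¹)
          = (q^2 - q^(2*(1+k+1)))⁻¹ * (q * (q^(2*(1+k)))⁻¹ - 1)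
            * ((2/π) * ∫ x in Set.Ioi (0:ℝ), ∏ j ∈ Finset.Icc 1 (1+k), (x^2 + q^(2*j))⁻¹) := by
        ring
      rw [step, ih hm]
      rw [show (1:ℕ)+k-1 = k by omega, show (1:ℕ)+k+1-1 = k+1 by omega,
        Finset.prod_Icc_succ_top (by omega : 1 ≤ k+1), show 2*(k+1)-1 = 2*k+1 by omega]
      rw [zpow_neg, zpow_neg, ← Nat.cast_pow, ← Nat.cast_pow, zpow_natCast, zpow_natCast]
      have key : (q^2 - q^(2*(1+k+1)))⁻¹ * (q * (q^(2*(1+k)))⁻¹ - 1) * (q^((1+k)^2))⁻¹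
          = (q^((1+k+1)^2))⁻¹ * ((1 - q^(2*k+1)) / (1 - q^(2*(k+1)))) := by
        have e1 : q^2 - q^(2*(1+k+1)) = q^2 * (1 - q^(2*(1+k))) := by ring
        have e2 : q * (q^(2*(1+k)))⁻¹ - 1 = (q^(2*(1+k)))⁻¹ * (q * (1 - q^(2*k+1))) := by
          have hB : (q:ℝ)^(2*(1+k)) ≠ 0 := by positivity
          field_simp
          ring
        have e3 : (q:ℝ)^((1+k+1)^2) = q^((1+k)^2) * q^(2*(1+k)) * q := by ring
        have e4 : (1:ℝ) - q^(2*(k+1)) = 1 - q^(2*(1+k)) := by ring_nf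
        rw [e1, e2, e3, e4, mul_inv, mul_inv, mul_inv, div_eq_mul_inv]
        field_simp
      linear_combination (∏ j ∈ Finset.Icc 1 k, (1 - q^(2*j-1)) / (1 - q^(2*j))) * key
end

section
/- For distinct positive reals q₁, ..., qₙ, the Matsubara sum ∑_{m=−∞}^∞ ∏_{k=1}^n 1/(m² + q_k²) equals π ∑_{k=1}^n (coth(π q_k)/q_k) ∏_{j≠k} 1/(q_j² − q_k²). -/
open Real Finset intervalIntegral

section Aux

lemma partial_fractions_s18 {ι : Type*} [DecidableEq ι] (s : Finset ι) (hs : s.Nonempty)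
    (a : ι → ℝ) (hd : ∀ j ∈ s, ∀ k ∈ s, j ≠ k → a j ≠ a k)
    (x : ℝ) (hx : ∀ k ∈ s, x + a k ≠ 0) :
    ∏ k ∈ s, (x + a k)⁻¹ = ∑ k ∈ s, (x + a k)⁻¹ * ∏ j ∈ s.erase k, (a j - a k)⁻¹ := by
  induction hs using Finset.Nonempty.cons_induction generalizing x with
  | singleton i => simp
  | cons i t hi ht IH =>
    have hd' : ∀ j ∈ t, ∀ k ∈ t, j ≠ k → a j ≠ a k := fun j hj k hk =>
      hd j (mem_cons_of_mem hj) k (mem_cons_of_mem hk)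
    have hai : ∀ k ∈ t, a k ≠ a i := fun k hk =>
      hd k (mem_cons_of_mem hk) i (mem_cons_self i t) (ne_of_mem_of_not_mem hk hi)
    have hxi : x + a i ≠ 0 := hx i (mem_cons_self i t)
    have hxt : ∀ k ∈ t, x + a k ≠ 0 := fun k hk => hx k (mem_cons_of_mem hk)
    have IH1 := IH hd' x hxt
    have IH2 := IH hd' (-a i) (fun k hk => by
      have := hai k hk; intro h; apply this; linarith)
    rw [prod_cons, sum_cons, IH1, mul_sum]
    have key : ∀ k ∈ t, (x + a i)⁻¹ * ((x + a k)⁻¹ * ∏ j ∈ t.erase k, (a j - a k)⁻¹)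
        = ((x + a i)⁻¹ * ((a k - a i)⁻¹ * ∏ j ∈ t.erase k, (a j - a k)⁻¹))
          + ((x + a k)⁻¹ * ((a i - a k)⁻¹ * ∏ j ∈ t.erase k, (a j - a k)⁻¹)) := by
      intro k hk
      have h1 : a k - a i ≠ 0 := fun h => hai k hk (by linarith)
      have h2 : x + a k ≠ 0 := hxt k hk
      have h3 : (x + a i)⁻¹ * (x + a k)⁻¹
          = (x + a i)⁻¹ * (a k - a i)⁻¹ + (x + a k)⁻¹ * (a i - a k)⁻¹ := by
        have h1' : a i - a k ≠ 0 := by intro h; apply h1; linarith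
        field_simp
        ring
      calc (x + a i)⁻¹ * ((x + a k)⁻¹ * ∏ j ∈ t.erase k, (a j - a k)⁻¹)
          = ((x + a i)⁻¹ * (x + a k)⁻¹) * ∏ j ∈ t.erase k, (a j - a k)⁻¹ := by ring
        _ = _ := by rw [h3]; ring
    rw [sum_congr rfl key, sum_add_distrib, ← mul_sum]
    congr 1
    · -- term at i
      have : ∀ k ∈ t, (a k - a i)⁻¹ = (-a i + a k)⁻¹ := fun k hk => by ring_nf
      rw [← sum_congr rfl (fun k hk => by rw [this k hk]), ← IH2]
      rw [erase_cons]
      congr 1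
      exact prod_congr rfl (fun j hj => by rw [← this j hj])
    · refine sum_congr rfl (fun k hk => ?_)
      rw [erase_cons_of_ne hi (ne_of_mem_of_not_mem hk hi).symm, prod_cons]

lemma cosh_fourier_integral (a : ℝ) (ha : 0 < a) (n : ℤ) :
    ∫ x in (-π)..π, Complex.exp (-(Complex.I * n * x)) * Complex.cosh (a * x)
      = Complex.exp (Complex.I * n * π) * (2 * a * Real.sinh (a * π)) /
          ((a : ℂ) ^ 2 + (n : ℂ) ^ 2) := by
  have ha' : (a : ℂ) ≠ 0 := Complex.ofReal_ne_zero.mpr ha.ne'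
  have h1 : (a : ℂ) - Complex.I * n ≠ 0 := by
    intro h
    have := congrArg Complex.re h
    simp [Complex.sub_re, Complex.mul_re] at this
    exact ha.ne' this
  have h2 : -(a : ℂ) - Complex.I * n ≠ 0 := by
    intro h
    have := congrArg Complex.re h
    simp [Complex.sub_re, Complex.mul_re] at this
    exact ha.ne' this
  have hD : ((a : ℂ) ^ 2 + (n : ℂ) ^ 2) ≠ 0 := by
    have : ((a : ℂ) ^ 2 + (n : ℂ) ^ 2) = ((a ^ 2 + (n:ℝ) ^ 2 : ℝ) : ℂ) := by push_cast; ring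
    rw [this]
    refine Complex.ofReal_ne_zero.mpr (by positivity)
  have hcongr : ∀ x : ℝ, Complex.exp (-(Complex.I * n * x)) * Complex.cosh (a * x)
      = (Complex.exp (((a : ℂ) - Complex.I * n) * x)
         + Complex.exp ((-(a : ℂ) - Complex.I * n) * x)) / 2 := by
    intro x
    rw [Complex.cosh, mul_comm, div_mul_eq_mul_div, add_mul, ← Complex.exp_add,
      ← Complex.exp_add]
    push_cast
    ring_nf
  have hint : ∀ c : ℂ, c ≠ 0 → IntervalIntegrable (fun x : ℝ => Complex.exp (c * x))
      MeasureTheory.volume (-π) π := fun c _ =>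
    (Complex.continuous_exp.comp (continuous_const.mul Complex.continuous_ofReal)).intervalIntegrable _ _
  calc ∫ x in (-π)..π, Complex.exp (-(Complex.I * n * x)) * Complex.cosh (a * x)
      = ∫ x in (-π)..π, (Complex.exp (((a : ℂ) - Complex.I * n) * x)
         + Complex.exp ((-(a : ℂ) - Complex.I * n) * x)) / 2 := by
        exact integral_congr (fun x _ => hcongr x)
    _ = ((∫ x in (-π)..π, Complex.exp (((a : ℂ) - Complex.I * n) * x))
         + ∫ x in (-π)..π, Complex.exp ((-(a : ℂ) - Complex.I * n) * x)) / 2 := by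
        rw [integral_div, integral_add (hint _ h1) (hint _ h2)]
    _ = ((Complex.exp (((a : ℂ) - Complex.I * n) * π) - Complex.exp (((a : ℂ) - Complex.I * n) * (-π)))
          / ((a : ℂ) - Complex.I * n)
         + (Complex.exp ((-(a : ℂ) - Complex.I * n) * π) - Complex.exp ((-(a : ℂ) - Complex.I * n) * (-π)))
          / (-(a : ℂ) - Complex.I * n)) / 2 := by
        rw [integral_exp_mul_complex h1, integral_exp_mul_complex h2]; push_cast; ring_nf
    _ = _ := by
        have hsplit : ∀ c d : ℂ, Complex.exp ((c + d) * (π:ℂ)) = Complex.exp (c * π) * Complex.exp (d * π) := by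
          intro c d; rw [← Complex.exp_add]; ring_nf
        set ε := Complex.exp (Complex.I * n * π) with hε
        set ε' := Complex.exp (-(Complex.I * n) * π) with hε'
        have hee : ε * ε' = 1 := by
          rw [hε, hε', ← Complex.exp_add]
          simpa using Complex.exp_zero
        have hsq : ε * ε = 1 := by
          rw [hε, ← Complex.exp_add]
          have harg : Complex.I * n * π + Complex.I * n * π = (n : ℂ) * (2 * π * Complex.I) := by
            ring
          rw [harg, Complex.exp_int_mul_two_pi_mul_I]
        have heps : ε' = ε := by
          calc ε' = ε * ε * ε' := by rw [hsq, one_mul]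
            _ = ε * (ε * ε') := by ring
            _ = ε := by rw [hee, mul_one]
        have e1 : Complex.exp (((a : ℂ) - Complex.I * n) * π) = Complex.exp (a * π) * ε' := by
          rw [hε', ← Complex.exp_add]; push_cast; ring_nf
        have e2 : Complex.exp (((a : ℂ) - Complex.I * n) * (-π)) =
            Complex.exp (-((a : ℂ) * π)) * ε := by
          rw [hε, ← Complex.exp_add]; push_cast; ring_nf
        have e3 : Complex.exp ((-(a : ℂ) - Complex.I * n) * π) =
            Complex.exp (-((a : ℂ) * π)) * ε' := by
          rw [hε', ← Complex.exp_add]; push_cast; ring_nf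
        have e4 : Complex.exp ((-(a : ℂ) - Complex.I * n) * (-π)) = Complex.exp (a * π) * ε := by
          rw [hε, ← Complex.exp_add]; push_cast; ring_nf
        have hsinh : ((Real.sinh (a * π) : ℝ) : ℂ)
            = (Complex.exp ((a : ℂ) * π) - Complex.exp (-((a : ℂ) * π))) / 2 := by
          rw [Complex.ofReal_sinh, Complex.sinh]; push_cast; ring_nf
        rw [e1, e2, e3, e4, hsinh, heps]
        field_simp
        ring_nf
        simp only [Complex.I_sq]
        ring

lemma summable_inv_sq_add_sq (a : ℝ) (ha : 0 < a) :
    Summable (fun m : ℤ => ((m : ℝ) ^ 2 + a ^ 2)⁻¹) := by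
  have hnat : Summable (fun n : ℕ => ((n : ℝ) ^ 2 + a ^ 2)⁻¹) := by
    rw [← summable_nat_add_iff 1]
    have hbase : Summable (fun n : ℕ => ((n : ℝ) ^ 2)⁻¹) := by
      simpa [one_div] using (Real.summable_one_div_nat_pow (p := 2)).mpr one_lt_two
    have hshift : Summable (fun n : ℕ => (((n + 1 : ℕ) : ℝ) ^ 2)⁻¹) :=
      (summable_nat_add_iff 1).mpr hbase
    refine hshift.of_nonneg_of_le (fun n => by positivity) (fun n => ?_)
    have h1 : (0 : ℝ) < ((n + 1 : ℕ) : ℝ) ^ 2 := by positivity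
    apply inv_anti₀ h1
    nlinarith [sq_nonneg a]
  apply Summable.of_nat_of_neg <;> · simpa using hnat

lemma hasSum_matsubara (a : ℝ) (ha : 0 < a) :
    HasSum (fun m : ℤ => ((m : ℝ) ^ 2 + a ^ 2)⁻¹)
      (π * (Real.cosh (π * a) / Real.sinh (π * a)) / a) := by
  haveI : Fact (0 < 2 * π) := ⟨by positivity⟩
  set f : ℝ → ℂ := fun x => Complex.cosh (a * x) with hf
  have hper : f (-π) = f (-π + 2 * π) := by
    simp only [hf]
    rw [show ((a : ℂ) * ((-π : ℝ) : ℂ)) = -(a * π) by push_cast; ring,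
      show ((a : ℂ) * ((-π + 2 * π : ℝ) : ℂ)) = a * π by push_cast; ring, Complex.cosh_neg]
  have hcont : Continuous (AddCircle.liftIco (2 * π) (-π) f) :=
    AddCircle.liftIco_continuous hper
      ((Complex.continuous_cosh.comp (continuous_const.mul Complex.continuous_ofReal)).continuousOn)
  set g : C(AddCircle (2 * π), ℂ) := ⟨AddCircle.liftIco (2 * π) (-π) f, hcont⟩ with hg
  -- Fourier coefficients
  have hcoeff : ∀ n : ℤ, fourierCoeff (⇑g) n =
      Complex.exp (Complex.I * n * π) * ((a * Real.sinh (a * π) / π : ℝ) : ℂ) *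
        (((n : ℝ) ^ 2 + a ^ 2 : ℝ) : ℂ)⁻¹ := by
    intro n
    have h1 : fourierCoeff (⇑g) n = fourierCoeffOn
        (lt_add_of_pos_right (-π) (Fact.out : (0:ℝ) < 2 * π)) f n :=
      fourierCoeff_liftIco_eq f n
    rw [h1, fourierCoeffOn_eq_integral]
    have h2 : ∀ x : ℝ, fourier (-n) ((x : ℝ) : AddCircle ((-π + 2 * π) - (-π))) • f x
        = Complex.exp (-(Complex.I * n * x)) * Complex.cosh (a * x) := by
      intro x
      rw [fourier_coe_apply, smul_eq_mul]
      congr 2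
      have hpi : ((-π + 2 * π) - (-π) : ℝ) = 2 * π := by ring
      rw [hpi]
      push_cast
      field_simp [Complex.ofReal_ne_zero.mpr Real.pi_ne_zero]
    rw [intervalIntegral.integral_congr (fun x _ => h2 x),
      show (-π + 2 * π : ℝ) = π by ring, cosh_fourier_integral a ha n]
    rw [Complex.real_smul]
    have hD : (((n : ℝ) ^ 2 + a ^ 2 : ℝ) : ℂ) ≠ 0 :=
      Complex.ofReal_ne_zero.mpr (by positivity)
    have hpi3 : ((2 * π : ℝ) : ℂ) ≠ 0 := Complex.ofReal_ne_zero.mpr (by positivity)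
    have hcast : ((a : ℂ) ^ 2 + (n : ℂ) ^ 2) = (((n : ℝ) ^ 2 + a ^ 2 : ℝ) : ℂ) := by
      push_cast; ring
    rw [hcast]
    have hpi4 : ((π : ℝ) : ℂ) ≠ 0 := Complex.ofReal_ne_zero.mpr Real.pi_ne_zero
    have hD' : ((n : ℂ) ^ 2 + (a : ℂ) ^ 2) ≠ 0 := by
      rw [show ((n : ℂ) ^ 2 + (a : ℂ) ^ 2) = (((n:ℝ) ^ 2 + a ^ 2 : ℝ) : ℂ) by push_cast; ring]
      exact hD
    rw [show (π - -π : ℝ) = 2 * π by ring]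
    push_cast
    field_simp
  -- summability of the Fourier coefficients
  have hsum : Summable (fourierCoeff (⇑g)) := by
    apply Summable.of_norm
    have : ∀ n : ℤ, ‖fourierCoeff (⇑g) n‖
        = |a * Real.sinh (a * π) / π| * ((n : ℝ) ^ 2 + a ^ 2)⁻¹ := by
      intro n
      rw [hcoeff n, norm_mul, norm_mul, Complex.norm_exp]
      have : (Complex.I * n * π).re = 0 := by simp [Complex.mul_re]
      rw [this, Real.exp_zero, one_mul, Complex.norm_real, Real.norm_eq_abs, norm_inv,
        Complex.norm_real, Real.norm_eq_abs, abs_of_pos (by positivity : (0:ℝ) < (n:ℝ)^2 + a^2)]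
    rw [funext this]
    exact (summable_inv_sq_add_sq a ha).mul_left _
  -- evaluate the Fourier series at π
  have hpt := has_pointwise_sum_fourier_series_of_summable (f := g) hsum ((π : ℝ) : AddCircle (2 * π))
  have hgval : g ((π : ℝ) : AddCircle (2 * π)) = ((Real.cosh (a * π) : ℝ) : ℂ) := by
    have hcoe1 : ((-π + 2 * π : ℝ) : AddCircle (2 * π)) = ((-π : ℝ) : AddCircle (2 * π)) :=
      AddCircle.coe_add_period (2 * π) (-π)
    have hcoe : ((π : ℝ) : AddCircle (2 * π)) = ((-π : ℝ) : AddCircle (2 * π)) := by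
      rw [← hcoe1]; congr 1; ring
    rw [hcoe]
    show AddCircle.liftIco (2 * π) (-π) f ((-π : ℝ) : AddCircle (2 * π)) = _
    rw [AddCircle.liftIco_coe_apply (by constructor <;> [linarith [Real.pi_pos]; linarith [Real.pi_pos]])]
    simp only [hf]
    rw [show ((a : ℂ) * ((-π : ℝ) : ℂ)) = -(a * π) by push_cast; ring, Complex.cosh_neg,
      Complex.ofReal_cosh]
    push_cast
    ring_nf
  have hfour : ∀ n : ℤ, (fourier n ((π : ℝ) : AddCircle (2 * π)) : ℂ)
      = Complex.exp (Complex.I * n * π) := by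
    intro n
    rw [fourier_coe_apply]
    congr 1
    field_simp [Complex.ofReal_ne_zero.mpr Real.pi_ne_zero]
    push_cast; ring
  have hterm : ∀ n : ℤ, fourierCoeff (⇑g) n • (fourier n ((π : ℝ) : AddCircle (2 * π)) : ℂ)
      = (((a * Real.sinh (a * π) / π) * ((n : ℝ) ^ 2 + a ^ 2)⁻¹ : ℝ) : ℂ) := by
    intro n
    rw [smul_eq_mul, hcoeff n, hfour n]
    have hsq : Complex.exp (Complex.I * n * π) * Complex.exp (Complex.I * n * π) = 1 := by
      rw [← Complex.exp_add]
      rw [show Complex.I * n * π + Complex.I * n * π = (n : ℂ) * (2 * π * Complex.I) by push_cast; ring,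
        Complex.exp_int_mul_two_pi_mul_I]
    push_cast
    linear_combination ((a : ℂ) * Complex.sinh ((a : ℂ) * (π : ℂ)) / (π : ℂ) *
      (((n : ℂ)) ^ 2 + (a : ℂ) ^ 2)⁻¹) * hsq
  rw [funext hterm, hgval] at hpt
  have hreal : HasSum (fun n : ℤ => (a * Real.sinh (a * π) / π) * ((n : ℝ) ^ 2 + a ^ 2)⁻¹)
      (Real.cosh (a * π)) := Complex.hasSum_ofReal.mp hpt
  have hC : (a * Real.sinh (a * π) / π) ≠ 0 := by
    have := Real.sinh_pos_iff.mpr (by positivity : (0:ℝ) < a * π)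
    positivity
  have := hreal.div_const (a * Real.sinh (a * π) / π)
  have heq : (fun n : ℤ => (a * Real.sinh (a * π) / π) * ((n : ℝ) ^ 2 + a ^ 2)⁻¹ /
      (a * Real.sinh (a * π) / π)) = fun n : ℤ => ((n : ℝ) ^ 2 + a ^ 2)⁻¹ := by
    funext n; field_simp
  rw [heq] at this
  rw [show π * (Real.cosh (π * a) / Real.sinh (π * a)) / a
      = Real.cosh (a * π) / (a * Real.sinh (a * π) / π) by
    rw [mul_comm π a]
    field_simp]
  exact this

end Aux

theorem matsubara_sum (n : ℕ) (q : Fin n → ℝ)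
    (hq : ∀ k, 0 < q k) (hinj : Function.Injective q) :
    ∑' m : ℤ, ∏ k, ((m:ℝ) ^ 2 + q k ^ 2)⁻¹ =
      π * ∑ k, (Real.cosh (π * q k) / Real.sinh (π * q k)) / q k *
        ∏ j ∈ Finset.univ.erase k, (q j ^ 2 - q k ^ 2)⁻¹ := by
  rcases Nat.eq_zero_or_pos n with hn | hn
  · subst hn
    have h1 : ∀ m : ℤ, ∏ k : Fin 0, ((m:ℝ) ^ 2 + q k ^ 2)⁻¹ = 1 := fun m => by simp
    rw [tsum_congr h1]
    have h2 : ¬ Summable (fun _ : ℤ => (1 : ℝ)) := by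
      intro h
      have := h.tendsto_cofinite_zero
      have h3 : Filter.Tendsto (fun _ : ℤ => (1 : ℝ)) Filter.cofinite (nhds 1) :=
        tendsto_const_nhds
      have : (1 : ℝ) = 0 := tendsto_nhds_unique h3 this
      norm_num at this
    rw [tsum_eq_zero_of_not_summable h2]
    simp
  · have hne : (Finset.univ : Finset (Fin n)).Nonempty := by
      rwa [Finset.univ_nonempty_iff, ← Fin.pos_iff_nonempty]
    have hd : ∀ j ∈ (Finset.univ : Finset (Fin n)), ∀ k ∈ (Finset.univ : Finset (Fin n)),
        j ≠ k → q j ^ 2 ≠ q k ^ 2 := by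
      intro j _ k _ hjk h
      apply hjk
      apply hinj
      nlinarith [hq j, hq k]
    have hpw : ∀ m : ℤ, ∏ k, ((m:ℝ) ^ 2 + q k ^ 2)⁻¹
        = ∑ k, ((m:ℝ) ^ 2 + q k ^ 2)⁻¹ * ∏ j ∈ Finset.univ.erase k, (q j ^ 2 - q k ^ 2)⁻¹ :=
      fun m => partial_fractions_s18 Finset.univ hne (fun k => q k ^ 2) hd ((m:ℝ) ^ 2)
        (fun k _ => ne_of_gt (add_pos_of_nonneg_of_pos (sq_nonneg _) (pow_pos (hq k) 2)))
    rw [tsum_congr hpw, Summable.tsum_finsetSum (fun k _ =>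
      (summable_inv_sq_add_sq (q k) (hq k)).mul_right _)]
    rw [Finset.mul_sum]
    refine Finset.sum_congr rfl (fun k _ => ?_)
    rw [((hasSum_matsubara (q k) (hq k)).mul_right _).tsum_eq]
    ring
end
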